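/- arXiv:2502.07448 — 6 statements merged into one kernel-verified Lean document; each statement's English description precedes it below -/
import Mathlib

section
/- For all nonzero real x, 1/(2(1 + |x|)) ≤ (cosh(x) - 1)/(x·sinh(x)) ≤ 1/2. -/
open Real

lemma sinh_le_mul_cosh {t : ℝ} (ht : 0 ≤ t) : Real.sinh t ≤ t * Real.cosh t := by
  have hds : ∀ s : ℝ, HasDerivAt (fun y : ℝ => y * Real.cosh y - Real.sinh y)
      (s * Real.sinh s) s := by
    intro s
    have := ((hasDerivAt_id s).mul (Real.hasDerivAt_cosh s)).sub
      (Real.hasDerivAt_sinh s)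
    exact this.congr_deriv (by simp [id_eq])
  have key : MonotoneOn (fun y : ℝ => y * Real.cosh y - Real.sinh y) (Set.Ici 0) := by
    apply monotoneOn_of_deriv_nonneg (convex_Ici 0)
    · fun_prop
    · intro s _
      exact (hds s).differentiableAt.differentiableWithinAt
    · intro s hs
      rw [(hds s).deriv]
      rw [interior_Ici, Set.mem_Ioi] at hs
      have : 0 ≤ Real.sinh s := by simpa using Real.sinh_le_sinh.2 hs.le
      exact mul_nonneg hs.le this
  have h0 := key (Set.self_mem_Ici) (Set.mem_Ici.2 ht) ht
  simp only [Real.sinh_zero, Real.cosh_zero, mul_one, zero_mul, sub_zero] at h0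
  linarith

lemma cosh_sinh_ratio_bounds_aux (x : ℝ) (hx : 0 < x) :
    1 / (2 * (1 + x)) ≤ (Real.cosh x - 1) / (x * Real.sinh x) ∧
      (Real.cosh x - 1) / (x * Real.sinh x) ≤ 1 / 2 := by
  have hs : 0 < Real.sinh x := Real.sinh_pos_iff.2 hx
  have hd : 0 < x * Real.sinh x := mul_pos hx hs
  have hu : 0 < Real.exp x := Real.exp_pos x
  have h1 : 1 + x ≤ Real.exp x := by linarith [Real.add_one_le_exp x]
  have h2 : 1 - x ≤ Real.exp (-x) := by linarith [Real.add_one_le_exp (-x)]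
  have hinv : Real.exp x * Real.exp (-x) = 1 := by
    rw [← Real.exp_add]; simp
  have hc : Real.cosh x = (Real.exp x + Real.exp (-x)) / 2 := Real.cosh_eq x
  have hsin : Real.sinh x = (Real.exp x - Real.exp (-x)) / 2 := Real.sinh_eq x
  have hvpos : 0 < Real.exp (-x) := Real.exp_pos _
  constructor
  · rw [div_le_div_iff₀ (by positivity) hd]
    rw [hc, hsin]
    nlinarith [mul_le_mul_of_nonneg_right h1 (by positivity : (0:ℝ) ≤ 2 + x),
      mul_le_mul_of_nonneg_left h1 hx.le, hinv, mul_pos hu hvpos,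
      mul_le_mul_of_nonneg_right h1 hvpos.le, sq_nonneg (Real.exp x - 1),
      mul_nonneg hx.le (sub_nonneg.2 h1),
      mul_nonneg (mul_nonneg hx.le hx.le) (sub_nonneg.2 h1)]
  · rw [div_le_div_iff₀ hd (by norm_num)]
    have hch := Real.cosh_two_mul (x / 2)
    have hsh := Real.sinh_two_mul (x / 2)
    rw [show 2 * (x / 2) = x from by ring] at hch hsh
    have hkey := sinh_le_mul_cosh (by linarith : (0:ℝ) ≤ x / 2)
    have hsnn : 0 ≤ Real.sinh (x / 2) := by
      simpa using Real.sinh_le_sinh.2 (by linarith : (0:ℝ) ≤ x / 2)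
    have hsq := Real.cosh_sq (x / 2)
    nlinarith [mul_le_mul_of_nonneg_left hkey hsnn]

theorem cosh_sinh_ratio_bounds (x : ℝ) (hx : x ≠ 0) :
    1 / (2 * (1 + |x|)) ≤ (Real.cosh x - 1) / (x * Real.sinh x) ∧
      (Real.cosh x - 1) / (x * Real.sinh x) ≤ 1 / 2 := by
  rcases hx.lt_or_gt with h | h
  · have := cosh_sinh_ratio_bounds_aux (-x) (by linarith)
    rw [abs_of_neg h]
    simpa [Real.cosh_neg, Real.sinh_neg, mul_comm] using this
  · have := cosh_sinh_ratio_bounds_aux x h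
    rwa [abs_of_pos h]
end

section
/- For every real α with |α| < π/2, the integral of e^{αx} with respect to the probability measure ν(dx) = dx/(2·cosh(πx/2)) on the real line equals 1/cos(α). -/
open Real MeasureTheory

lemma beta_reflection_aux (s : ℝ) (hs0 : 0 < s) (hs1 : s < 1) :
    ∫ u in Set.Ioo (0:ℝ) 1, u ^ (s - 1) * (1 - u) ^ (1 - s - 1) = π / Real.sin (π * s) := by
  have h1 : Complex.betaIntegral (s : ℂ) (1 - (s : ℂ)) =
      ((∫ u in (0:ℝ)..1, u ^ (s - 1) * (1 - u) ^ (1 - s - 1) : ℝ) : ℂ) := by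
    rw [Complex.betaIntegral, ← intervalIntegral.integral_ofReal]
    refine intervalIntegral.integral_congr fun x hx => ?_
    rw [Set.uIcc_of_le zero_le_one] at hx
    have h1x : (0:ℝ) ≤ 1 - x := by linarith [hx.2]
    rw [show ((s:ℂ) - 1) = ((s - 1 : ℝ) : ℂ) by push_cast; ring,
      show (1 - (s:ℂ) - 1) = ((1 - s - 1 : ℝ) : ℂ) by push_cast; ring,
      show (1 - (x:ℂ)) = ((1 - x : ℝ) : ℂ) by push_cast; ring,
      ← Complex.ofReal_cpow hx.1, ← Complex.ofReal_cpow h1x, ← Complex.ofReal_mul]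
  have h2 : Complex.Gamma (s : ℂ) * Complex.Gamma (1 - (s : ℂ)) =
      Complex.betaIntegral (s : ℂ) (1 - (s : ℂ)) := by
    have h := Complex.Gamma_mul_Gamma_eq_betaIntegral (s := (s : ℂ)) (t := 1 - (s : ℂ))
      (by simpa using hs0) (by simp; linarith)
    rw [h, show ((s : ℂ) + (1 - (s : ℂ))) = 1 by ring, Complex.Gamma_one, one_mul]
  have h3 := Complex.Gamma_mul_Gamma_one_sub (s : ℂ)
  rw [h2, h1] at h3
  have h4 : ((∫ u in (0:ℝ)..1, u ^ (s - 1) * (1 - u) ^ (1 - s - 1) : ℝ) : ℂ)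
      = ((π / Real.sin (π * s) : ℝ) : ℂ) := by
    rw [h3]; push_cast; ring_nf
  have h5 := Complex.ofReal_injective h4
  rw [← h5, intervalIntegral.integral_of_le zero_le_one,
    MeasureTheory.integral_Ioc_eq_integral_Ioo]

theorem integral_exp_sech (α : ℝ) (hα : |α| < Real.pi / 2) :
    ∫ x : ℝ, Real.exp (α * x) * (1 / (2 * Real.cosh (Real.pi * x / 2))) = 1 / Real.cos α := by
  have hπ : (0:ℝ) < π := Real.pi_pos
  obtain ⟨hα1, hα2⟩ := abs_lt.mp hα
  set s : ℝ := α / π + 1/2 with hs_def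
  have hq1 : -(1/2 : ℝ) < α / π := by
    rw [lt_div_iff₀ hπ]; linarith
  have hq2 : α / π < 1/2 := by
    rw [div_lt_iff₀ hπ]; linarith
  have hs0 : 0 < s := by rw [hs_def]; linarith
  have hs1 : s < 1 := by rw [hs_def]; linarith
  set f : ℝ → ℝ := fun u => (Real.log u - Real.log (1 - u)) / π with hf_def
  set F : ℝ → ℝ := fun u => (u⁻¹ + (1 - u)⁻¹) / π with hF_def
  have hderiv : ∀ u ∈ Set.Ioo (0:ℝ) 1, HasDerivWithinAt f (F u) (Set.Ioo 0 1) u := by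
    intro u hu
    obtain ⟨hu0, hu1⟩ := hu
    have h1u : (0:ℝ) < 1 - u := by linarith
    have d1 : HasDerivAt Real.log u⁻¹ u := Real.hasDerivAt_log hu0.ne'
    have d2 : HasDerivAt (fun x : ℝ => 1 - x) (-1) u := by
      simpa using (hasDerivAt_id u).const_sub 1
    have d3 : HasDerivAt (fun x : ℝ => Real.log (1 - x)) ((1 - u)⁻¹ * (-1)) u :=
      (Real.hasDerivAt_log h1u.ne').comp u d2
    have d4 := (d1.sub d3).div_const π
    have : u⁻¹ - (1 - u)⁻¹ * (-1) = u⁻¹ + (1 - u)⁻¹ := by ring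
    rw [this] at d4
    exact d4.hasDerivWithinAt
  have hinj : Set.InjOn f (Set.Ioo (0:ℝ) 1) := by
    apply StrictMonoOn.injOn
    intro a ha b hb hab
    have l1 : Real.log a < Real.log b := Real.log_lt_log ha.1 hab
    have l2 : Real.log (1 - b) < Real.log (1 - a) :=
      Real.log_lt_log (by linarith [hb.2]) (by linarith)
    have : Real.log a - Real.log (1 - a) < Real.log b - Real.log (1 - b) := by linarith
    exact div_lt_div_of_pos_right this hπ
  have himg : f '' Set.Ioo (0:ℝ) 1 = Set.univ := by
    apply Set.eq_univ_of_forall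
    intro y
    set e : ℝ := Real.exp (π * y) with he_def
    have he0 : 0 < e := Real.exp_pos _
    refine ⟨e / (1 + e), ⟨by positivity, ?_⟩, ?_⟩
    · rw [div_lt_one (by positivity)]; linarith
    · have h1me : 1 - e / (1 + e) = (1 + e)⁻¹ := by field_simp; ring
      simp only [hf_def]
      rw [h1me, Real.log_inv, Real.log_div he0.ne' (by positivity)]
      rw [he_def, Real.log_exp]
      field_simp
      ring
  have key := integral_image_eq_integral_abs_deriv_smul measurableSet_Ioo hderiv hinj
      (fun x => Real.exp (α * x) * (1 / (2 * Real.cosh (π * x / 2))))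
  rw [himg] at key
  rw [← MeasureTheory.setIntegral_univ, key]
  have heq : Set.EqOn
      (fun u => |F u| • (Real.exp (α * f u) * (1 / (2 * Real.cosh (π * f u / 2)))))
      (fun u => (1/π) * (u ^ (s - 1) * (1 - u) ^ (1 - s - 1))) (Set.Ioo (0:ℝ) 1) := by
    intro u hu
    obtain ⟨hu0, hu1⟩ := hu
    have h1u : (0:ℝ) < 1 - u := by linarith
    set a : ℝ := Real.sqrt u with ha_def
    set b : ℝ := Real.sqrt (1 - u) with hb_def
    have ha0 : 0 < a := Real.sqrt_pos.mpr hu0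
    have hb0 : 0 < b := Real.sqrt_pos.mpr h1u
    have ha2 : a ^ 2 = u := Real.sq_sqrt hu0.le
    have hb2 : b ^ 2 = 1 - u := Real.sq_sqrt h1u.le
    have hpif : π * f u = Real.log u - Real.log (1 - u) := by
      rw [hf_def]; field_simp
    have h2cosh : 2 * Real.cosh (π * f u / 2) = (a * b)⁻¹ := by
      rw [Real.cosh_eq, hpif]
      have ht : (Real.log u - Real.log (1 - u)) / 2 = Real.log a - Real.log b := by
        rw [ha_def, hb_def, Real.log_sqrt hu0.le, Real.log_sqrt h1u.le]; ring
      rw [ht, Real.exp_sub, neg_sub, Real.exp_sub, Real.exp_log ha0, Real.exp_log hb0]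
      have hsum : a / b + b / a = (a * b)⁻¹ := by
        rw [div_add_div _ _ hb0.ne' ha0.ne', show a * a + b * b = 1 by nlinarith [ha2, hb2],
          one_div, mul_comm]
      linarith [hsum]
    have hexp : Real.exp (α * f u) = u ^ (α/π) * (1 - u) ^ (-(α/π)) := by
      rw [Real.rpow_def_of_pos hu0, Real.rpow_def_of_pos h1u, ← Real.exp_add, hf_def]
      congr 1
      field_simp
      ring
    have hFpos : 0 < F u := by
      rw [hF_def]
      have : (0:ℝ) < u⁻¹ + (1 - u)⁻¹ := by positivity
      positivity
    have hupow : u ^ (s - 1) = u ^ (α/π) * a⁻¹ := by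
      rw [show s - 1 = α/π + (-(1/2 : ℝ)) by rw [hs_def]; ring, Real.rpow_add hu0,
        Real.rpow_neg hu0.le, ha_def, Real.sqrt_eq_rpow]
    have hvpow : (1 - u) ^ (1 - s - 1) = (1 - u) ^ (-(α/π)) * b⁻¹ := by
      rw [show 1 - s - 1 = -(α/π) + (-(1/2 : ℝ)) by rw [hs_def]; ring, Real.rpow_add h1u,
        Real.rpow_neg h1u.le, Real.rpow_neg h1u.le, hb_def, Real.sqrt_eq_rpow]
    simp only [smul_eq_mul]
    rw [abs_of_pos hFpos, hexp, h2cosh, one_div, inv_inv, hupow, hvpow, hF_def]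
    have hx1 : u⁻¹ + (1 - u)⁻¹ = (u * (1 - u))⁻¹ := by
      field_simp
      ring
    have hkey : (u⁻¹ + (1 - u)⁻¹) * (a * b) = a⁻¹ * b⁻¹ := by
      rw [hx1, show u * (1 - u) = (a * b) ^ 2 by rw [mul_pow, ha2, hb2]]
      field_simp
    linear_combination (u ^ (α/π) * (1 - u) ^ (-(α/π)) / π) * hkey
  rw [MeasureTheory.setIntegral_congr_fun measurableSet_Ioo heq,
    MeasureTheory.integral_const_mul, beta_reflection_aux s hs0 hs1]
  have hπs : π * s = α + π/2 := by rw [hs_def]; field_simp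
  rw [hπs, Real.sin_add_pi_div_two]
  have hcos : 0 < Real.cos α := Real.cos_pos_of_mem_Ioo ⟨by linarith, hα2⟩
  field_simp
end

section
/- For complex s, t in the open unit disc, cos(arctan s + arctan t)·√(1+s²)·√(1+t²) = 1 - s·t, where arctan z = (i/2)·log((1 - i z)/(1 + i z)) and the principal branches of log and square root are used. -/
open Complex

noncomputable def arctanC (z : ℂ) : ℂ :=
  (Complex.I / 2) * Complex.log ((1 - Complex.I * z) / (1 + Complex.I * z))

lemma aux_re_sub (z : ℂ) (hz : ‖z‖ < 1) : 0 < (1 - Complex.I * z).re := by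
  have h := Complex.abs_im_le_norm z
  simp only [sub_re, one_re, mul_re, I_re, I_im, zero_mul, one_mul]
  have : |z.im| < 1 := lt_of_le_of_lt h hz
  have := abs_lt.mp this
  simp; linarith

lemma aux_re_add (z : ℂ) (hz : ‖z‖ < 1) : 0 < (1 + Complex.I * z).re := by
  have h := Complex.abs_im_le_norm z
  have : |z.im| < 1 := lt_of_le_of_lt h hz
  have := abs_lt.mp this
  simp only [add_re, one_re, mul_re, I_re, I_im, zero_mul, one_mul]
  linarith

lemma aux_arg {w : ℂ} (hw : 0 < w.re) : |w.arg| < Real.pi / 2 :=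
  abs_arg_lt_pi_div_two_iff.mpr (Or.inl hw)

lemma aux_log_mul {a b : ℂ} (ha : 0 < a.re) (hb : 0 < b.re) :
    Complex.log (a * b) = Complex.log a + Complex.log b := by
  have ha' : a ≠ 0 := fun h => by simp [h] at ha
  have hb' : b ≠ 0 := fun h => by simp [h] at hb
  refine Complex.log_mul ha' hb' ?_
  have h1 := abs_lt.mp (aux_arg ha)
  have h2 := abs_lt.mp (aux_arg hb)
  have hpi := Real.pi_pos
  constructor <;> [skip; skip] <;> nlinarith [h1.1, h1.2, h2.1, h2.2]

lemma aux_log_div {a b : ℂ} (ha : 0 < a.re) (hb : 0 < b.re) :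
    Complex.log (a / b) = Complex.log a - Complex.log b := by
  have hb' : b ≠ 0 := fun h => by simp [h] at hb
  have harg : b.arg ≠ Real.pi := by
    have := abs_lt.mp (aux_arg hb)
    have hpi := Real.pi_pos
    intro h; rw [h] at this; linarith [this.2]
  have hinv : 0 < (b⁻¹).re := by
    rw [Complex.inv_re]
    exact div_pos hb (Complex.normSq_pos.mpr hb')
  rw [div_eq_mul_inv, aux_log_mul ha hinv, Complex.log_inv b harg, sub_eq_add_neg]

theorem cos_arctan_add_arctan (s t : ℂ) (hs : ‖s‖ < 1) (ht : ‖t‖ < 1) :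
    Complex.cos (arctanC s + arctanC t) *
      (1 + s ^ 2) ^ ((1 : ℂ) / 2) * (1 + t ^ 2) ^ ((1 : ℂ) / 2) = 1 - s * t := by
  set a : ℂ := 1 - Complex.I * s with ha_def
  set b : ℂ := 1 + Complex.I * s with hb_def
  set c : ℂ := 1 - Complex.I * t with hc_def
  set d : ℂ := 1 + Complex.I * t with hd_def
  have hare : 0 < a.re := aux_re_sub s hs
  have hbre : 0 < b.re := aux_re_add s hs
  have hcre : 0 < c.re := aux_re_sub t ht
  have hdre : 0 < d.re := aux_re_add t ht
  have ha' : a ≠ 0 := fun h => by simp [h] at hare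
  have hb' : b ≠ 0 := fun h => by simp [h] at hbre
  have hc' : c ≠ 0 := fun h => by simp [h] at hcre
  have hd' : d ≠ 0 := fun h => by simp [h] at hdre
  have hs2 : (1 : ℂ) + s ^ 2 = a * b := by
    rw [ha_def, hb_def]; linear_combination (s^2) * Complex.I_mul_I
  have ht2 : (1 : ℂ) + t ^ 2 = c * d := by
    rw [hc_def, hd_def]; linear_combination (t^2) * Complex.I_mul_I
  have hab : a * b ≠ 0 := mul_ne_zero ha' hb'
  have hcd : c * d ≠ 0 := mul_ne_zero hc' hd'
  set La := Complex.log a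
  set Lb := Complex.log b
  set Lc := Complex.log c
  set Ld := Complex.log d
  have hlogab : Complex.log (a * b) = La + Lb := aux_log_mul hare hbre
  have hlogcd : Complex.log (c * d) = Lc + Ld := aux_log_mul hcre hdre
  have hlogdivs : Complex.log (a / b) = La - Lb := aux_log_div hare hbre
  have hlogdivt : Complex.log (c / d) = Lc - Ld := aux_log_div hcre hdre
  have hcpow1 : (1 + s ^ 2) ^ ((1 : ℂ) / 2) = Complex.exp ((La + Lb) * (1 / 2)) := by
    rw [hs2, Complex.cpow_def_of_ne_zero hab, hlogab]
  have hcpow2 : (1 + t ^ 2) ^ ((1 : ℂ) / 2) = Complex.exp ((Lc + Ld) * (1 / 2)) := by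
    rw [ht2, Complex.cpow_def_of_ne_zero hcd, hlogcd]
  have hX : arctanC s + arctanC t = (Complex.I / 2) * ((La - Lb) + (Lc - Ld)) := by
    rw [arctanC, arctanC, ← ha_def, ← hb_def, ← hc_def, ← hd_def, hlogdivs, hlogdivt]
    ring
  set X := arctanC s + arctanC t with hXdef
  have hXI : X * Complex.I = (Lb + Ld - La - Lc) / 2 := by
    rw [hX]
    linear_combination ((La - Lb + Lc - Ld) / 2) * Complex.I_mul_I
  have hnXI : -X * Complex.I = (La + Lc - Lb - Ld) / 2 := by
    rw [neg_mul, hXI]; ring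
  have hcos : Complex.cos X =
      (Complex.exp ((Lb + Ld - La - Lc) / 2) + Complex.exp ((La + Lc - Lb - Ld) / 2)) / 2 := by
    rw [Complex.cos, hXI, hnXI]
  rw [hcos, hcpow1, hcpow2]
  have e1 : Complex.exp ((Lb + Ld - La - Lc) / 2) * Complex.exp ((La + Lb) * (1 / 2)) *
      Complex.exp ((Lc + Ld) * (1 / 2)) = b * d := by
    rw [← Complex.exp_add, ← Complex.exp_add,
      show (Lb + Ld - La - Lc) / 2 + (La + Lb) * (1 / 2) + (Lc + Ld) * (1 / 2) = Lb + Ld by ring,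
      Complex.exp_add, Complex.exp_log hb', Complex.exp_log hd']
  have e2 : Complex.exp ((La + Lc - Lb - Ld) / 2) * Complex.exp ((La + Lb) * (1 / 2)) *
      Complex.exp ((Lc + Ld) * (1 / 2)) = a * c := by
    rw [← Complex.exp_add, ← Complex.exp_add,
      show (La + Lc - Lb - Ld) / 2 + (La + Lb) * (1 / 2) + (Lc + Ld) * (1 / 2) = La + Lc by ring,
      Complex.exp_add, Complex.exp_log ha', Complex.exp_log hc']
  have hfin : b * d + a * c = 2 - 2 * (s * t) := by
    rw [ha_def, hb_def, hc_def, hd_def]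
    linear_combination (2 * s * t) * Complex.I_mul_I
  linear_combination (1 / 2) * e1 + (1 / 2) * e2 + (1 / 2) * hfin
end

section
/- For any analytic function G(z) = Σ_{k≥0} a_k z^k on the open unit disc with real coefficients a_k, and any nonnegative measurable weight φ on (0,1), ∫_0^1 ∫_{D(0,1-ε)} |G'(z)|² dλ(z) φ(ε) dε = (π/2)·Σ_{k≥1} Γ_φ(k)·a_k², where Γ_φ(k) = 2k·∫_0^1 (1-ε)^{2k} φ(ε) dε and λ is Lebesgue measure on ℂ, with both sides possibly equal to +∞. -/
set_option maxHeartbeats 1000000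

open MeasureTheory Metric

section AuxLemmasWDI

open Set

lemma norm_exp_mul_I (w : ℂ) (hw : w.im = 0) : ‖Complex.exp (w * Complex.I)‖ = 1 := by
  rw [Complex.norm_exp]
  simp [Complex.mul_re, hw]

lemma orth_int {n : ℤ} (hn : n ≠ 0) :
    ∫ θ in (-Real.pi)..Real.pi, Complex.exp ((n : ℂ) * θ * Complex.I) = 0 := by
  have hnI : (n : ℂ) * Complex.I ≠ 0 :=
    mul_ne_zero (by exact_mod_cast hn) Complex.I_ne_zero
  have key : ∀ θ : ℝ, HasDerivAt
      (fun t : ℝ => Complex.exp ((n : ℂ) * t * Complex.I) / ((n : ℂ) * Complex.I))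
      (Complex.exp ((n : ℂ) * θ * Complex.I)) θ := by
    intro θ
    have h2 : HasDerivAt (fun w : ℂ => (n : ℂ) * w * Complex.I) ((n : ℂ) * Complex.I) (θ : ℂ) := by
      simpa using ((hasDerivAt_id ((θ : ℂ))).const_mul (n : ℂ)).mul_const Complex.I
    have h3 := (Complex.hasDerivAt_exp ((n : ℂ) * (θ:ℂ) * Complex.I)).comp (θ : ℂ) h2
    have h4 := h3.div_const ((n : ℂ) * Complex.I)
    have h5 : Complex.exp ((n:ℂ) * (θ:ℂ) * Complex.I) * ((n:ℂ) * Complex.I) / ((n:ℂ) * Complex.I)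
        = Complex.exp ((n:ℂ) * (θ:ℂ) * Complex.I) := by
      rw [mul_div_assoc, div_self hnI, mul_one]
    rw [h5] at h4
    exact h4.comp_ofReal
  rw [intervalIntegral.integral_eq_sub_of_hasDerivAt (fun θ _ => key θ) ?_]
  · have hval : Complex.exp ((n:ℂ) * (-Real.pi : ℝ) * Complex.I)
        = Complex.exp ((n:ℂ) * (Real.pi : ℝ) * Complex.I) := by
      have : (n:ℂ) * ((-Real.pi : ℝ) : ℂ) * Complex.I
          = (n:ℂ) * ((Real.pi : ℝ):ℂ) * Complex.I - (n:ℂ) * (2 * (Real.pi:ℂ) * Complex.I) := by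
        push_cast; ring
      rw [this, Complex.exp_sub, Complex.exp_int_mul_two_pi_mul_I, div_one]
    rw [hval, sub_self]
  · apply Continuous.intervalIntegrable
    apply Complex.continuous_exp.comp
    fun_prop


variable {G : ℂ → ℂ} {a : ℕ → ℝ}
variable (hG : ∀ z ∈ Metric.ball (0 : ℂ) 1, HasSum (fun k : ℕ => (a k : ℂ) * z ^ k) (G z))

include hG in
lemma coeff_bound {q : ℝ} (hq0 : 0 ≤ q) (hq : q < 1) :
    ∃ C, 0 ≤ C ∧ ∀ k, |a k| * q ^ k ≤ C := by
  have hmem : ((q : ℂ)) ∈ Metric.ball (0 : ℂ) 1 := by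
    simp [Complex.norm_real, abs_of_nonneg hq0, hq]
  have hs : Summable (fun k : ℕ => (a k : ℂ) * (q : ℂ) ^ k) := (hG _ hmem).summable
  have ht : Filter.Tendsto (fun k : ℕ => |a k| * q ^ k) Filter.atTop (nhds 0) := by
    have := (hs.tendsto_atTop_zero).norm
    rw [norm_zero] at this
    convert this using 2 with k
    rw [norm_mul, Complex.norm_real, norm_pow, Complex.norm_real,
      Real.norm_eq_abs, Real.norm_eq_abs, abs_of_nonneg hq0]
  have hbdd : BddAbove (Set.range fun k : ℕ => |a k| * q ^ k) := ht.bddAbove_range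
  obtain ⟨C, hC⟩ := hbdd
  refine ⟨C, le_trans (by positivity) (hC ⟨0, rfl⟩), fun k => hC ⟨k, rfl⟩⟩

include hG in
lemma summable_aux (m : ℕ) {q : ℝ} (hq0 : 0 < q) (hq : q < 1) :
    Summable (fun k : ℕ => ((k : ℝ) + 1) ^ m * |a (k + 1)| * q ^ k) := by
  set q' : ℝ := (1 + q) / 2 with hq'
  have hq'0 : 0 < q' := by positivity
  have hq'1 : q' < 1 := by rw [hq']; linarith
  have hqq' : q < q' := by rw [hq']; linarith
  obtain ⟨C, hC0, hC⟩ := coeff_bound hG hq'0.le hq'1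
  set ρ : ℝ := q / q' with hρ
  have hρ0 : 0 < ρ := by positivity
  have hρ1 : ρ < 1 := by rw [hρ, div_lt_one hq'0]; exact hqq'
  have hgeom : Summable (fun n : ℕ => (n : ℝ) ^ m * ρ ^ n) :=
    summable_pow_mul_geometric_of_norm_lt_one m (by rwa [Real.norm_eq_abs, abs_of_pos hρ0])
  have hgeom' : Summable (fun k : ℕ => ((k : ℝ) + 1) ^ m * ρ ^ (k + 1)) := by
    have := (summable_nat_add_iff 1).2 hgeom
    simpa using this
  have hgeom'' : Summable (fun k : ℕ => (C / q') * (ρ⁻¹ * (((k : ℝ) + 1) ^ m * ρ ^ (k + 1)))) :=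
    (hgeom'.mul_left _).mul_left _
  refine Summable.of_nonneg_of_le (fun k => by positivity) (fun k => ?_) hgeom''
  have hak : |a (k + 1)| ≤ C / q' ^ (k + 1) := by
    rw [le_div_iff₀ (by positivity)]
    exact hC (k + 1)
  calc ((k : ℝ) + 1) ^ m * |a (k + 1)| * q ^ k
      ≤ ((k : ℝ) + 1) ^ m * (C / q' ^ (k + 1)) * q ^ k := by
        apply mul_le_mul_of_nonneg_right _ (by positivity)
        exact mul_le_mul_of_nonneg_left hak (by positivity)
    _ = (C / q') * (ρ⁻¹ * (((k : ℝ) + 1) ^ m * ρ ^ (k + 1))) := by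
        rw [hρ]
        clear_value ρ q'
        field_simp
        rw [div_pow, mul_div_assoc', mul_div_right_comm, mul_div_cancel_right₀ _ (pow_ne_zero _ hq'0.ne'), pow_succ]
        ring
  
lemma sq_summable {x : ℕ → ℝ} (hx : ∀ k, 0 ≤ x k) (h : Summable x) :
    Summable (fun k => x k ^ 2) := by
  obtain ⟨C, hC⟩ := h.tendsto_atTop_zero.bddAbove_range
  refine Summable.of_nonneg_of_le (fun k => sq_nonneg _) (fun k => ?_) (h.mul_left C)
  have : x k ≤ C := hC ⟨k, rfl⟩
  calc x k ^ 2 = x k * x k := sq (x k)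
    _ ≤ C * x k := mul_le_mul_of_nonneg_right this (hx k)


include hG in
lemma G_hasDerivAt {z : ℂ} (hz : ‖z‖ < 1) :
    HasDerivAt G (∑' n : ℕ, (a n : ℂ) * ((n : ℂ) * z ^ (n - 1))) z := by
  set R : ℝ := (‖z‖ + 1) / 2 with hR
  have hR0 : 0 < R := by positivity
  have hR1 : R < 1 := by rw [hR]; linarith
  have hzR : ‖z‖ < R := by rw [hR]; linarith
  set u : ℕ → ℝ := fun n => n * |a n| * R ^ (n - 1) with hu_def
  have hu : Summable u := by
    rw [← summable_nat_add_iff 1]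
    have := summable_aux hG 1 hR0 hR1
    simp only [pow_one] at this
    convert this using 2 with k
    · rfl
    simp [hu_def]
  set f : ℕ → ℂ → ℂ := fun n w => (a n : ℂ) * w ^ n with hf_def
  set f' : ℕ → ℂ → ℂ := fun n w => (a n : ℂ) * ((n : ℂ) * w ^ (n - 1)) with hf'_def
  have hf : ∀ n y, y ∈ Metric.ball (0 : ℂ) R → HasDerivAt (f n) (f' n y) y := by
    intro n y _
    simpa [hf_def, hf'_def, mul_comm] using (hasDerivAt_pow n y).const_mul (a n : ℂ)
  have hf' : ∀ n y, y ∈ Metric.ball (0 : ℂ) R → ‖f' n y‖ ≤ u n := by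
    intro n y hy
    rw [mem_ball_zero_iff] at hy
    simp only [hf'_def, hu_def, norm_mul, Complex.norm_real, Complex.norm_natCast, norm_pow,
      Real.norm_eq_abs]
    calc |a n| * ((n : ℝ) * ‖y‖ ^ (n - 1)) ≤ |a n| * ((n : ℝ) * R ^ (n - 1)) := by
          apply mul_le_mul_of_nonneg_left _ (abs_nonneg _)
          exact mul_le_mul_of_nonneg_left (pow_le_pow_left₀ (norm_nonneg _) hy.le _) (by positivity)
      _ = (n : ℝ) * |a n| * R ^ (n - 1) := by ring
  have hz1 : z ∈ Metric.ball (0 : ℂ) 1 := mem_ball_zero_iff.mpr hz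
  have hzRb : z ∈ Metric.ball (0 : ℂ) R := mem_ball_zero_iff.mpr hzR
  have hf0 : Summable fun n => f n z := (hG z hz1).summable
  have key : HasDerivAt (fun y => ∑' n, f n y) (∑' n, f' n z) z :=
    hasDerivAt_tsum_of_isPreconnected hu isOpen_ball (convex_ball _ _).isPreconnected
      hf hf' hzRb hf0 hzRb
  have hEq : (fun y => ∑' n, f n y) =ᶠ[nhds z] G := by
    filter_upwards [isOpen_ball.mem_nhds hz1] with w hw
    exact (hG w hw).tsum_eq
  exact key.congr_of_eventuallyEq hEq.symm

include hG in
lemma deriv_hasSum {z : ℂ} (hz : ‖z‖ < 1) :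
    HasSum (fun k : ℕ => ((((k : ℝ) + 1) * a (k + 1) : ℝ) : ℂ) * z ^ k) (deriv G z) := by
  set R : ℝ := (‖z‖ + 1) / 2 with hR
  have hR0 : 0 < R := by positivity
  have hR1 : R < 1 := by rw [hR]; linarith
  have hzR : ‖z‖ < R := by rw [hR]; linarith
  have hd : deriv G z = ∑' n : ℕ, (a n : ℂ) * ((n : ℂ) * z ^ (n - 1)) :=
    (G_hasDerivAt hG hz).deriv
  set t : ℕ → ℂ := fun k => ((((k : ℝ) + 1) * a (k + 1) : ℝ) : ℂ) * z ^ k with ht_def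
  have hsum_t : Summable t := by
    apply Summable.of_norm_bounded (summable_aux hG 1 hR0 hR1)
    intro k
    simp only [ht_def, pow_one, norm_mul, Complex.norm_real, Real.norm_eq_abs, norm_pow, abs_mul]
    rw [abs_of_nonneg (by positivity : (0:ℝ) ≤ (k : ℝ) + 1)]
    rw [mul_assoc]
    have hp : ‖z‖ ^ k ≤ R ^ k := pow_le_pow_left₀ (norm_nonneg _) hzR.le _
    have h1 : (0:ℝ) ≤ (k : ℝ) + 1 := by positivity
    nlinarith [abs_nonneg (a (k+1)), pow_nonneg (norm_nonneg z) k,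
      mul_le_mul_of_nonneg_left hp (abs_nonneg (a (k+1)))]
  have hsum_f' : Summable (fun n : ℕ => (a n : ℂ) * ((n : ℂ) * z ^ (n - 1))) := by
    rw [← summable_nat_add_iff 1]
    apply hsum_t.congr
    intro k
    simp only [ht_def, Nat.add_sub_cancel]
    push_cast
    ring
  have : (∑' n : ℕ, (a n : ℂ) * ((n : ℂ) * z ^ (n - 1))) = ∑' k, t k := by
    rw [Summable.tsum_eq_zero_add hsum_f']
    simp only [Nat.cast_zero, zero_mul, mul_zero, zero_add]
    apply tsum_congr
    intro k
    simp only [ht_def, Nat.add_sub_cancel]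
    push_cast
    ring
  rw [hd, this]
  exact hsum_t.hasSum

include hG in
lemma deriv_contOn : ContinuousOn (deriv G) (Metric.ball (0 : ℂ) 1) := by
  have hdiff : DifferentiableOn ℂ G (Metric.ball (0 : ℂ) 1) := fun z hz =>
    ((G_hasDerivAt hG (mem_ball_zero_iff.mp hz)).differentiableAt).differentiableWithinAt
  have hana : AnalyticOnNhd ℂ G (Metric.ball (0 : ℂ) 1) :=
    hdiff.analyticOnNhd isOpen_ball
  exact hana.deriv.continuousOn


include hG in
lemma circle_int {s : ℝ} (hs0 : 0 < s) (hs1 : s < 1) :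
    ∫ θ in Set.Ioo (-Real.pi) Real.pi,
        ‖deriv G ((s : ℂ) * Complex.exp ((θ : ℂ) * Complex.I))‖ ^ 2 =
      2 * Real.pi * ∑' k : ℕ, (((k : ℝ) + 1) * a (k + 1) * s ^ k) ^ 2 := by
  set c : ℕ → ℝ := fun k => ((k : ℝ) + 1) * a (k + 1) * s ^ k with hc_def
  have habs : ∀ k, |c k| = ((k : ℝ) + 1) * |a (k + 1)| * s ^ k := by
    intro k
    rw [hc_def, abs_mul, abs_mul,
      abs_of_nonneg (by positivity : (0:ℝ) ≤ (k : ℝ) + 1),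
      abs_of_nonneg (by positivity : (0:ℝ) ≤ s ^ k)]
  have hc : Summable (fun k => |c k|) := by
    rw [funext habs]
    simpa using summable_aux hG 1 hs0 hs1
  set u : ℕ → ℝ → ℂ := fun k θ => (c k : ℂ) * Complex.exp ((k : ℂ) * θ * Complex.I) with hu_def
  have hnorm_u : ∀ k θ, ‖u k θ‖ = |c k| := by
    intro k θ
    rw [hu_def]
    simp only [norm_mul, Complex.norm_real, Real.norm_eq_abs]
    rw [norm_exp_mul_I ((k : ℂ) * θ) (by simp), mul_one]
  have hsum : ∀ θ : ℝ, HasSum (fun k => u k θ)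
      (deriv G ((s : ℂ) * Complex.exp ((θ : ℂ) * Complex.I))) := by
    intro θ
    have hz : ‖(s : ℂ) * Complex.exp ((θ : ℂ) * Complex.I)‖ < 1 := by
      rw [norm_mul, norm_exp_mul_I (θ : ℂ) (by simp), mul_one, Complex.norm_real,
        Real.norm_eq_abs, abs_of_pos hs0]
      exact hs1
    have h0 := deriv_hasSum hG hz
    have hfun : (fun k : ℕ => ((((k : ℝ) + 1) * a (k + 1) : ℝ) : ℂ) *
        ((s : ℂ) * Complex.exp ((θ : ℂ) * Complex.I)) ^ k) = fun k => u k θ := by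
      funext k
      rw [hu_def, mul_pow, ← Complex.exp_nat_mul,
        show ((k : ℕ) : ℂ) * ((θ : ℂ) * Complex.I) = (k : ℂ) * θ * Complex.I by push_cast; ring,
        hc_def]
      push_cast
      ring
    rw [← hfun]
    exact h0
  set v : ℕ × ℕ → ℝ → ℂ := fun p θ => ((c p.1 * c p.2 : ℝ) : ℂ) *
    Complex.exp (((((p.1 : ℤ) - (p.2 : ℤ)) : ℤ) : ℂ) * θ * Complex.I) with hv_def
  have hconj : ∀ (k : ℕ) (θ : ℝ), (starRingEnd ℂ) (u k θ) =
      (c k : ℂ) * Complex.exp (-((k : ℂ) * θ * Complex.I)) := by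
    intro k θ
    rw [hu_def]
    simp only [map_mul, Complex.conj_ofReal, ← Complex.exp_conj, Complex.conj_I, map_natCast]
    ring_nf
  have hprod_term : ∀ (p : ℕ × ℕ) (θ : ℝ),
      u p.1 θ * (starRingEnd ℂ) (u p.2 θ) = v p θ := by
    rintro ⟨j, k⟩ θ
    rw [hconj, hv_def]
    simp only [hu_def]
    rw [show (((((j : ℤ) - (k : ℤ)) : ℤ) : ℂ) * θ * Complex.I) =
        (j : ℂ) * θ * Complex.I + -((k : ℂ) * θ * Complex.I) by push_cast; ring,
      Complex.exp_add]
    push_cast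
    ring
  have hsummable_u : ∀ θ : ℝ, Summable (fun k => ‖u k θ‖) := by
    intro θ; rw [funext (fun k => hnorm_u k θ)]; exact hc
  have hps : ∀ θ : ℝ, HasSum (fun p : ℕ × ℕ => v p θ)
      (deriv G ((s : ℂ) * Complex.exp ((θ : ℂ) * Complex.I)) *
        (starRingEnd ℂ) (deriv G ((s : ℂ) * Complex.exp ((θ : ℂ) * Complex.I)))) := by
    intro θ
    have h1 := hsum θ
    have h2 : HasSum (fun k => (starRingEnd ℂ) (u k θ))
        ((starRingEnd ℂ) (deriv G ((s : ℂ) * Complex.exp ((θ : ℂ) * Complex.I)))) :=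
      (RCLike.hasSum_conj' ℂ).mpr h1
    have hsummable_prod : Summable (fun p : ℕ × ℕ => u p.1 θ * (starRingEnd ℂ) (u p.2 θ)) :=
      summable_mul_of_summable_norm (f := fun k => u k θ)
        (g := fun k => (starRingEnd ℂ) (u k θ)) (hsummable_u θ)
        (by simpa only [RCLike.norm_conj] using hsummable_u θ)
    have := h1.mul h2 hsummable_prod
    rw [funext (fun p => hprod_term p θ)] at this
    exact this
  have h_eq : ∀ θ : ℝ, ((‖deriv G ((s : ℂ) * Complex.exp ((θ : ℂ) * Complex.I))‖ ^ 2 : ℝ) : ℂ)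
      = ∑' p : ℕ × ℕ, v p θ := by
    intro θ
    rw [(hps θ).tsum_eq, RCLike.mul_conj]
    norm_cast
  have hint : ∀ p : ℕ × ℕ, Integrable (v p) (volume.restrict (Set.Ioo (-Real.pi) Real.pi)) := by
    intro p
    have hcont : Continuous (v p) := by
      apply continuous_const.mul
      apply Complex.continuous_exp.comp
      fun_prop
    exact (hcont.integrableOn_Icc).mono_set Set.Ioo_subset_Icc_self
  have hnorm_v : ∀ (p : ℕ × ℕ) (θ : ℝ), ‖v p θ‖ = |c p.1 * c p.2| := by
    intro p θ
    rw [hv_def]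
    simp only [norm_mul, Complex.norm_real, Real.norm_eq_abs]
    rw [norm_exp_mul_I _ (by simp), mul_one]
    exact (abs_mul _ _).symm
  have hnorm_int : ∀ p : ℕ × ℕ,
      ∫ θ in Set.Ioo (-Real.pi) Real.pi, ‖v p θ‖ = |c p.1 * c p.2| * (2 * Real.pi) := by
    intro p
    rw [funext (hnorm_v p)]
    rw [setIntegral_const, measureReal_def, Real.volume_Ioo, smul_eq_mul, ENNReal.toReal_ofReal (by linarith [Real.pi_pos])]
    ring
  have habs_sum : Summable (fun p : ℕ × ℕ => |c p.1 * c p.2| * (2 * Real.pi)) := by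
    apply Summable.mul_right
    have := hc.mul_of_nonneg hc (fun k => abs_nonneg _) (fun k => abs_nonneg _)
    apply this.congr
    intro p
    exact (abs_mul _ _).symm
  have hF_sum : Summable fun p : ℕ × ℕ => ∫ θ in Set.Ioo (-Real.pi) Real.pi, ‖v p θ‖ := by
    rw [funext hnorm_int]
    exact habs_sum
  have swap := integral_tsum_of_summable_integral_norm hint hF_sum
  have hval : ∀ p : ℕ × ℕ, ∫ θ in Set.Ioo (-Real.pi) Real.pi, v p θ =
      if p.1 = p.2 then ((c p.1 ^ 2 * (2 * Real.pi) : ℝ) : ℂ) else 0 := by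
    rintro ⟨j, k⟩
    by_cases hjk : j = k
    · subst hjk
      rw [if_pos rfl]
      have : ∀ θ : ℝ, v (j, j) θ = ((c j * c j : ℝ) : ℂ) := by
        intro θ
        rw [hv_def]
        simp
      rw [integral_congr_ae (ae_of_all _ this), setIntegral_const, measureReal_def, Real.volume_Ioo,
        ENNReal.toReal_ofReal (by linarith [Real.pi_pos])]
      rw [show Real.pi - -Real.pi = 2 * Real.pi by ring]
      rw [Complex.real_smul]
      push_cast
      ring
    · rw [if_neg hjk]
      have : ∀ θ : ℝ, v (j, k) θ = ((c j * c k : ℝ) : ℂ) *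
          Complex.exp (((((j : ℤ) - (k : ℤ)) : ℤ) : ℂ) * θ * Complex.I) := fun θ => rfl
      rw [integral_congr_ae (ae_of_all _ this), MeasureTheory.integral_const_mul _ _,
        ← integral_Ioc_eq_integral_Ioo,
        ← intervalIntegral.integral_of_le (by linarith [Real.pi_pos] : -Real.pi ≤ Real.pi),
        orth_int (sub_ne_zero.mpr (by exact_mod_cast hjk)), mul_zero]
  have hsummable_ite : Summable (fun p : ℕ × ℕ =>
      if p.1 = p.2 then ((c p.1 ^ 2 * (2 * Real.pi) : ℝ) : ℂ) else 0) := by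
    apply Summable.of_norm_bounded habs_sum
    rintro ⟨j, k⟩
    by_cases hjk : j = k
    · subst hjk
      simp only [if_pos rfl, if_true, eq_self_iff_true, Complex.norm_real, Real.norm_eq_abs]
      rw [abs_mul, abs_of_nonneg (by linarith [Real.pi_pos] : (0:ℝ) ≤ 2 * Real.pi)]
      apply mul_le_mul_of_nonneg_right _ (by linarith [Real.pi_pos])
      rw [sq]
    · simp only [if_neg hjk, norm_zero]
      positivity
  have htsum_ite : (∑' p : ℕ × ℕ,
      if p.1 = p.2 then ((c p.1 ^ 2 * (2 * Real.pi) : ℝ) : ℂ) else 0)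
      = ((∑' k : ℕ, c k ^ 2 * (2 * Real.pi) : ℝ) : ℂ) := by
    rw [Summable.tsum_prod' hsummable_ite (fun j => summable_of_ne_finset_zero (s := {j})
      (fun k hk => if_neg (by simpa [eq_comm] using hk)))]
    rw [Complex.ofReal_tsum]
    apply tsum_congr
    intro j
    have : (fun k => if j = k then ((c j ^ 2 * (2 * Real.pi) : ℝ) : ℂ) else 0)
        = fun k => if k = j then ((c j ^ 2 * (2 * Real.pi) : ℝ) : ℂ) else 0 := by
      funext k; exact if_congr eq_comm rfl rfl
    rw [this, tsum_ite_eq]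
  have hcast : ((∫ θ in Set.Ioo (-Real.pi) Real.pi,
      ‖deriv G ((s : ℂ) * Complex.exp ((θ : ℂ) * Complex.I))‖ ^ 2 : ℝ) : ℂ)
      = ((2 * Real.pi * ∑' k : ℕ, c k ^ 2 : ℝ) : ℂ) := by
    have hbridge : ((∫ θ in Set.Ioo (-Real.pi) Real.pi,
        ‖deriv G ((s : ℂ) * Complex.exp ((θ : ℂ) * Complex.I))‖ ^ 2 : ℝ) : ℂ)
        = ∫ θ in Set.Ioo (-Real.pi) Real.pi,
          ((‖deriv G ((s : ℂ) * Complex.exp ((θ : ℂ) * Complex.I))‖ ^ 2 : ℝ) : ℂ) :=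
      integral_ofReal.symm
    rw [hbridge]
    rw [integral_congr_ae (ae_of_all _ h_eq), ← swap, tsum_congr hval, htsum_ite]
    norm_cast
    rw [tsum_mul_right]
    ring
  rwa [Complex.ofReal_inj] at hcast

include hG in
lemma key_summable {r : ℝ} (hr0 : 0 < r) (hr1 : r < 1) :
    Summable (fun k : ℕ => ((k : ℝ) + 1) * a (k + 1) ^ 2 * r ^ (2 * (k + 1))) := by
  have hsq : Summable (fun k : ℕ => (((k : ℝ) + 1) * |a (k + 1)| * r ^ k) ^ 2) := by
    apply sq_summable (fun k => by positivity)
    simpa using summable_aux hG 1 hr0 hr1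
  apply Summable.of_nonneg_of_le (fun k => by positivity) _ (hsq.mul_left (r ^ 2))
  intro k
  have h1 : ((k : ℝ) + 1) ≤ ((k : ℝ) + 1) ^ 2 := by nlinarith [Nat.cast_nonneg (α := ℝ) k]
  calc ((k : ℝ) + 1) * a (k + 1) ^ 2 * r ^ (2 * (k + 1))
      = ((k : ℝ) + 1) * (a (k + 1) ^ 2 * (r ^ 2 * (r ^ k) ^ 2)) := by ring
    _ ≤ ((k : ℝ) + 1) ^ 2 * (a (k + 1) ^ 2 * (r ^ 2 * (r ^ k) ^ 2)) := by
        apply mul_le_mul_of_nonneg_right h1 (by positivity)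
    _ = r ^ 2 * (((k : ℝ) + 1) * |a (k + 1)| * r ^ k) ^ 2 := by
        rw [← sq_abs (a (k + 1))]
        ring

include hG in
lemma key_ball {r : ℝ} (hr0 : 0 < r) (hr1 : r < 1) :
    IntegrableOn (fun z => ‖deriv G z‖ ^ 2) (Metric.ball (0 : ℂ) r) ∧
    ∫ z in Metric.ball (0 : ℂ) r, ‖deriv G z‖ ^ 2
      = Real.pi * ∑' k : ℕ, ((k : ℝ) + 1) * a (k + 1) ^ 2 * r ^ (2 * (k + 1)) := by
  have hcont : ContinuousOn (fun z => ‖deriv G z‖ ^ 2) (Metric.ball (0 : ℂ) 1) :=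
    ((deriv_contOn hG).norm).pow 2
  have hInt : IntegrableOn (fun z => ‖deriv G z‖ ^ 2) (Metric.ball (0 : ℂ) r) := by
    apply IntegrableOn.mono_set _ Metric.ball_subset_closedBall
    exact ((hcont.mono (Metric.closedBall_subset_ball hr1)).integrableOn_compact
      (isCompact_closedBall _ _))
  refine ⟨hInt, ?_⟩
  set F : ℂ → ℝ := (Metric.ball (0 : ℂ) r).indicator (fun z => ‖deriv G z‖ ^ 2) with hF_def
  have h1 : ∫ z in Metric.ball (0 : ℂ) r, ‖deriv G z‖ ^ 2 = ∫ z, F z :=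
    (integral_indicator measurableSet_ball).symm
  have h2 : ∫ z, F z = ∫ p in Complex.polarCoord.target, p.1 • F (Complex.polarCoord.symm p) :=
    (Complex.integral_comp_polarCoord_symm F).symm
  set S : Set (ℝ × ℝ) := Set.Ioo (0 : ℝ) r ×ˢ Set.Ioo (-Real.pi) Real.pi with hS_def
  set W : ℝ × ℝ → ℝ := fun q => q.1 * ‖deriv G (Complex.polarCoord.symm q)‖ ^ 2 with hW_def
  have habs : ∀ q : ℝ × ℝ, 0 < q.1 → ‖Complex.polarCoord.symm q‖ = q.1 := by
    intro q hq
    rw [Complex.norm_polarCoord_symm, abs_of_pos hq]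
  have h3 : ∀ p ∈ Complex.polarCoord.target,
      p.1 • F (Complex.polarCoord.symm p) = S.indicator W p := by
    rintro ⟨ρ, θ⟩ hp
    rw [Complex.polarCoord_target, Set.mem_prod] at hp
    obtain ⟨hρ0, hθ⟩ := hp
    rw [Set.mem_Ioi] at hρ0
    by_cases hρr : ρ < r
    · have hmem : Complex.polarCoord.symm (ρ, θ) ∈ Metric.ball (0 : ℂ) r := by
        rw [mem_ball_zero_iff, habs (ρ, θ) hρ0]
        exact hρr
      have hmemS : ((ρ, θ) : ℝ × ℝ) ∈ S := ⟨⟨hρ0, hρr⟩, hθ⟩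
      rw [hF_def, Set.indicator_of_mem hmem, Set.indicator_of_mem hmemS, hW_def, smul_eq_mul]
    · have hnmem : Complex.polarCoord.symm (ρ, θ) ∉ Metric.ball (0 : ℂ) r := by
        rw [mem_ball_zero_iff, habs (ρ, θ) hρ0]
        exact fun h => hρr h
      have hnmemS : ((ρ, θ) : ℝ × ℝ) ∉ S := fun h => hρr h.1.2
      rw [hF_def, Set.indicator_of_notMem hnmem, Set.indicator_of_notMem hnmemS, smul_zero]
  have hSsub : S ⊆ Complex.polarCoord.target := by
    rw [Complex.polarCoord_target, hS_def]
    exact Set.prod_mono (fun x hx => hx.1) (fun x hx => hx)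
  have h4 : ∫ p in Complex.polarCoord.target, p.1 • F (Complex.polarCoord.symm p)
      = ∫ p in S, W p := by
    rw [setIntegral_congr_fun (by
      rw [Complex.polarCoord_target]
      exact (isOpen_Ioi.prod isOpen_Ioo).measurableSet) h3]
    rw [setIntegral_indicator (by
      rw [hS_def]
      exact (isOpen_Ioo.prod isOpen_Ioo).measurableSet)]
    congr 1
    rw [Set.inter_eq_right.mpr hSsub]
  -- continuity of W on the compact rectangle
  have hsymm_cont : Continuous (fun q : ℝ × ℝ => Complex.polarCoord.symm q) := by
    have : (fun q : ℝ × ℝ => Complex.polarCoord.symm q)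
        = fun q : ℝ × ℝ => (q.1 : ℂ) * ((Real.cos q.2 : ℝ) + (Real.sin q.2 : ℝ) * Complex.I) :=
      funext fun q => by rw [Complex.polarCoord_symm_apply]
    rw [this]
    fun_prop
  set K : Set (ℝ × ℝ) := Set.Icc (0 : ℝ) r ×ˢ Set.Icc (-Real.pi) Real.pi with hK_def
  have hWcont : ContinuousOn W K := by
    apply (continuous_fst.continuousOn).mul
    apply ContinuousOn.pow
    apply ContinuousOn.norm
    apply (deriv_contOn hG).comp hsymm_cont.continuousOn
    rintro ⟨ρ, θ⟩ ⟨hρ, _⟩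
    rw [mem_ball_zero_iff, Complex.norm_polarCoord_symm]
    calc |ρ| ≤ r := abs_le.mpr ⟨le_trans (by linarith) hρ.1, hρ.2⟩
      _ < 1 := hr1
  have hW_int : IntegrableOn W S := by
    apply IntegrableOn.mono_set (hWcont.integrableOn_compact (isCompact_Icc.prod isCompact_Icc))
    exact Set.prod_mono Set.Ioo_subset_Icc_self Set.Ioo_subset_Icc_self
  have h5 : ∫ p in S, W p
      = ∫ ρ in Set.Ioo (0 : ℝ) r, ∫ θ in Set.Ioo (-Real.pi) Real.pi, W (ρ, θ) := by
    rw [hS_def, Measure.volume_eq_prod] at *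
    exact setIntegral_prod W hW_int
  have h6 : ∀ ρ ∈ Set.Ioo (0 : ℝ) r,
      ∫ θ in Set.Ioo (-Real.pi) Real.pi, W (ρ, θ)
        = ∑' k : ℕ, 2 * Real.pi * (((k : ℝ) + 1) * a (k + 1)) ^ 2 * ρ ^ (2 * k + 1) := by
    rintro ρ ⟨hρ0, hρr⟩
    have hsymm_eq : ∀ θ : ℝ, Complex.polarCoord.symm (ρ, θ)
        = (ρ : ℂ) * Complex.exp ((θ : ℂ) * Complex.I) := by
      intro θ
      rw [Complex.polarCoord_symm_apply, Complex.exp_mul_I, Complex.ofReal_cos,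
        Complex.ofReal_sin]
    have hWθ : ∀ θ : ℝ, W (ρ, θ) = ρ * ‖deriv G ((ρ : ℂ) * Complex.exp ((θ : ℂ) * Complex.I))‖ ^ 2 := by
      intro θ
      simp only [hW_def]
      rw [hsymm_eq θ]
    rw [integral_congr_ae (ae_of_all _ hWθ), MeasureTheory.integral_const_mul,
      circle_int hG hρ0 (lt_trans hρr hr1)]
    rw [← tsum_mul_left, ← tsum_mul_left]
    apply tsum_congr
    intro k
    rw [mul_pow, mul_pow, ← pow_mul]
    ring
  have hb_sq : Summable (fun k : ℕ => (((k : ℝ) + 1) * |a (k + 1)| * r ^ k) ^ 2) := by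
    apply sq_summable (fun k => by positivity)
    simpa using summable_aux hG 1 hr0 hr1
  have hval : ∀ k : ℕ, ∫ ρ in Set.Ioo (0 : ℝ) r,
      2 * Real.pi * (((k : ℝ) + 1) * a (k + 1)) ^ 2 * ρ ^ (2 * k + 1)
      = 2 * Real.pi * (((k : ℝ) + 1) * a (k + 1)) ^ 2 * (r ^ (2 * k + 2) / (2 * k + 2)) := by
    intro k
    rw [MeasureTheory.integral_const_mul]
    congr 1
    rw [← integral_Ioc_eq_integral_Ioo, ← intervalIntegral.integral_of_le hr0.le,
      integral_pow]
    rw [zero_pow (by omega), sub_zero]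
    push_cast
    ring_nf
  have hint2 : ∀ k : ℕ, Integrable
      (fun ρ => 2 * Real.pi * (((k : ℝ) + 1) * a (k + 1)) ^ 2 * ρ ^ (2 * k + 1))
      (volume.restrict (Set.Ioo (0 : ℝ) r)) := by
    intro k
    exact ((continuous_const.mul (continuous_pow _)).integrableOn_Icc).mono_set
      Set.Ioo_subset_Icc_self
  have hnorm_sum : Summable (fun k : ℕ => ∫ ρ in Set.Ioo (0 : ℝ) r,
      ‖2 * Real.pi * (((k : ℝ) + 1) * a (k + 1)) ^ 2 * ρ ^ (2 * k + 1)‖) := by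
    have heq : ∀ k : ℕ, ∫ ρ in Set.Ioo (0 : ℝ) r,
        ‖2 * Real.pi * (((k : ℝ) + 1) * a (k + 1)) ^ 2 * ρ ^ (2 * k + 1)‖
        = 2 * Real.pi * (((k : ℝ) + 1) * a (k + 1)) ^ 2 * (r ^ (2 * k + 2) / (2 * k + 2)) := by
      intro k
      rw [← hval k]
      apply setIntegral_congr_fun measurableSet_Ioo
      intro ρ hρ
      have hρ0 : (0:ℝ) ≤ ρ := le_of_lt hρ.1
      simp only [Real.norm_eq_abs]
      rw [abs_of_nonneg (by positivity)]
    rw [funext heq]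
    apply Summable.of_nonneg_of_le (fun k => by positivity) _
      (hb_sq.mul_left (2 * Real.pi * r ^ 2))
    intro k
    have hXeq : 2 * Real.pi * (((k : ℝ) + 1) * a (k + 1)) ^ 2 * (r ^ (2 * k + 2) / (2 * k + 2))
        = (2 * Real.pi * r ^ 2 * (((k : ℝ) + 1) * |a (k + 1)| * r ^ k) ^ 2) / (2 * (k:ℝ) + 2) := by
      rw [show (((k:ℝ) + 1) * |a (k + 1)| * r ^ k) ^ 2
          = (((k:ℝ) + 1) * a (k + 1)) ^ 2 * (r ^ k) ^ 2 from by
        rw [mul_pow, mul_pow, sq_abs, mul_pow]]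
      rw [show 2 * k + 2 = 2 + k * 2 from by omega, pow_add, ← pow_mul]
      ring
    rw [hXeq]
    apply div_le_self (by positivity)
    have : (0:ℝ) ≤ (k:ℝ) := Nat.cast_nonneg k
    linarith
  have swap2 := integral_tsum_of_summable_integral_norm hint2 hnorm_sum
  rw [h1, h2, h4, h5, integral_congr_ae (ae_restrict_iff' measurableSet_Ioo |>.mpr
    (ae_of_all _ h6)), ← swap2, tsum_congr hval, ← tsum_mul_left]
  apply tsum_congr
  intro k
  have hk : (2 * (k:ℝ) + 2) ≠ 0 := by positivity
  rw [show 2 * (k + 1) = 2 * k + 2 from by omega]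
  field_simp

end AuxLemmasWDI

theorem weighted_disc_integral (G : ℂ → ℂ) (a : ℕ → ℝ) (φ : ℝ → ENNReal)
    (hφ : Measurable φ)
    (hG : ∀ z ∈ Metric.ball (0 : ℂ) 1, HasSum (fun k : ℕ => (a k : ℂ) * z ^ k) (G z)) :
    ∫⁻ ε in Set.Ioo (0 : ℝ) 1,
        (∫⁻ z in Metric.ball (0 : ℂ) (1 - ε), ENNReal.ofReal (‖deriv G z‖ ^ 2)) * φ ε =
      ENNReal.ofReal (Real.pi / 2) *
        ∑' k : ℕ,
          ((2 * (k + 1) : ENNReal) *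
              ∫⁻ ε in Set.Ioo (0 : ℝ) 1,
                ENNReal.ofReal ((1 - ε) ^ (2 * (k + 1))) * φ ε) *
            ENNReal.ofReal (a (k + 1) ^ 2) := by
  have key : ∀ ε ∈ Set.Ioo (0:ℝ) 1,
      (∫⁻ z in Metric.ball (0:ℂ) (1 - ε), ENNReal.ofReal (‖deriv G z‖ ^ 2))
        = ∑' k : ℕ, ENNReal.ofReal
            (Real.pi * (((k:ℝ) + 1) * a (k + 1) ^ 2 * (1 - ε) ^ (2 * (k + 1)))) := by
    rintro ε ⟨hε0, hε1⟩
    have hr0 : 0 < 1 - ε := by linarith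
    have hr1 : 1 - ε < 1 := by linarith
    obtain ⟨hInt, hval⟩ := key_ball hG hr0 hr1
    have hnn : 0 ≤ᵐ[volume.restrict (Metric.ball (0:ℂ) (1-ε))] fun z => ‖deriv G z‖ ^ 2 :=
      ae_of_all _ fun z => by positivity
    rw [← ofReal_integral_eq_lintegral_ofReal hInt hnn, hval, ← tsum_mul_left,
      ENNReal.ofReal_tsum_of_nonneg (fun k => by positivity)
        ((key_summable hG hr0 hr1).mul_left Real.pi)]
  have hTmeas : ∀ k : ℕ, Measurable (fun ε : ℝ =>
      ENNReal.ofReal (Real.pi * (((k:ℝ) + 1) * a (k + 1) ^ 2 * (1 - ε) ^ (2 * (k + 1)))) * φ ε) := by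
    intro k
    apply Measurable.mul _ hφ
    apply ENNReal.measurable_ofReal.comp
    fun_prop
  have hcongr : ∫⁻ ε in Set.Ioo (0:ℝ) 1,
      (∫⁻ z in Metric.ball (0:ℂ) (1 - ε), ENNReal.ofReal (‖deriv G z‖ ^ 2)) * φ ε
      = ∫⁻ ε in Set.Ioo (0:ℝ) 1, ∑' k : ℕ, ENNReal.ofReal
          (Real.pi * (((k:ℝ) + 1) * a (k + 1) ^ 2 * (1 - ε) ^ (2 * (k + 1)))) * φ ε := by
    apply setLIntegral_congr_fun measurableSet_Ioo
    intro ε hε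
    dsimp only
    rw [key ε hε]
    exact (ENNReal.tsum_mul_right).symm
  rw [hcongr, lintegral_tsum (fun k => (hTmeas k).aemeasurable)]
  rw [← ENNReal.tsum_mul_left]
  apply tsum_congr
  intro k
  have hstep : ∀ ε : ℝ,
      ENNReal.ofReal (Real.pi * (((k:ℝ) + 1) * a (k + 1) ^ 2 * (1 - ε) ^ (2 * (k + 1)))) * φ ε
      = ENNReal.ofReal (Real.pi * (((k:ℝ) + 1) * a (k + 1) ^ 2)) *
          (ENNReal.ofReal ((1 - ε) ^ (2 * (k + 1))) * φ ε) := by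
    intro ε
    rw [show Real.pi * (((k:ℝ) + 1) * a (k + 1) ^ 2 * (1 - ε) ^ (2 * (k + 1)))
        = (Real.pi * (((k:ℝ) + 1) * a (k + 1) ^ 2)) * (1 - ε) ^ (2 * (k + 1)) from by ring,
      ENNReal.ofReal_mul (by positivity), mul_assoc]
  rw [lintegral_congr hstep]
  rw [lintegral_const_mul (ENNReal.ofReal (Real.pi * (((k:ℝ) + 1) * a (k + 1) ^ 2)))
    (f := fun ε => ENNReal.ofReal ((1 - ε) ^ (2 * (k + 1))) * φ ε)
    (((by fun_prop : Measurable fun ε : ℝ => (1 - ε) ^ (2 * (k + 1))).ennreal_ofReal).mul hφ)]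
  have hconst : ENNReal.ofReal (Real.pi * (((k:ℝ) + 1) * a (k + 1) ^ 2))
      = ENNReal.ofReal (Real.pi / 2) * (2 * ((k : ENNReal) + 1)) *
          ENNReal.ofReal (a (k + 1) ^ 2) := by
    rw [show (2 * ((k : ENNReal) + 1)) = ENNReal.ofReal (2 * ((k:ℝ) + 1)) from by
      rw [ENNReal.ofReal_mul (by norm_num), ENNReal.ofReal_add (by positivity) zero_le_one,
        ENNReal.ofReal_natCast, ENNReal.ofReal_one, ENNReal.ofReal_ofNat]]
    rw [← ENNReal.ofReal_mul (by positivity), ← ENNReal.ofReal_mul (by positivity)]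
    congr 1
    ring
  rw [hconst]
  ring
end

section
/- For any 0 < r < 1, the image under arctan of the open disc D(0,r) equals the set of points θ + iy with 2|θ| ≤ arccos(1/C_r) and |y| ≤ (1/2)·log(R_{θ,r}), where C_r = (1+r²)/(1-r²) and R_{θ,r} = C_r·cos(2θ) + √(C_r²·cos²(2θ) − 1); here arctan z = (i/2)·log((1−iz)/(1+iz)) with the principal branch of log, and ℂ is identified with ℝ². -/
open Real Complex

private lemma arccos_anti' {x y : ℝ} (h : x ≤ y) : Real.arccos y ≤ Real.arccos x := by
  simp only [Real.arccos]
  have := Real.monotone_arcsin h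
  linarith

private lemma mulIhalf_re (u : ℂ) : ((Complex.I/2) * u).re = -u.im/2 := by
  simp [Complex.mul_re, Complex.div_re, Complex.div_im, Complex.normSq_apply]
  ring

private lemma mulIhalf_im (u : ℂ) : ((Complex.I/2) * u).im = u.re/2 := by
  simp [Complex.mul_im, Complex.div_re, Complex.div_im, Complex.normSq_apply]
  ring

private lemma abs_le_iff_normSq_le {w : ℂ} {t : ℝ} (ht : 0 ≤ t) :
    ‖w‖ ≤ t ↔ Complex.normSq w ≤ t^2 := by
  rw [← Complex.sq_norm]
  constructor
  · intro h; nlinarith [norm_nonneg w]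
  · intro h; nlinarith [norm_nonneg w]

private lemma l_hq {C ρ s c b : ℝ} (hCρ : C^2 - ρ^2 = 1)
    (h : (s*c - C)*(s*c - C) + b*b ≤ ρ^2) (hs2 : (s*c)^2 + b^2 = s^2) :
    s^2 + 1 ≤ 2*C*(s*c) := by nlinarith

private lemma l_hCcos {C s c : ℝ} (hs : 0 < s) (h : s^2 + 1 ≤ 2*C*(s*c)) : 1 ≤ C*c := by
  nlinarith [sq_nonneg (s - 1)]

private lemma l_hsq1 {C s c : ℝ} (h : s^2 + 1 ≤ 2*C*(s*c)) : (s - C*c)^2 ≤ C^2*c^2 - 1 := by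
  nlinarith

private lemma l_hD {C c : ℝ} (h : 1 ≤ C*c) : 0 ≤ C^2*c^2 - 1 := by nlinarith

private lemma l_hslow {C c sq s : ℝ} (h3 : 0 ≤ s - (C*c - sq)) (hR : 0 ≤ C*c + sq)
    (hsq2 : sq^2 = C^2*c^2 - 1) : 1 ≤ s * (C*c + sq) := by
  nlinarith [mul_nonneg h3 hR]

private lemma l_hqs {C c sq s : ℝ} (hsq2 : sq^2 = C^2*c^2 - 1) (hRpos : 0 < C*c + sq)
    (hspos : 0 < s) (hle : s ≤ C*c + sq) (hlow : 1 ≤ s * (C*c + sq)) :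
    s^2 + 1 ≤ 2*C*c*s := by
  have hm : (0:ℝ) ≤ ((C*c+sq) - s) * (s*(C*c+sq) - 1) :=
    mul_nonneg (by linarith) (by linarith)
  nlinarith [hm, hRpos, hspos, hsq2]

private lemma l_hz0 {r a b s c : ℝ} (hden : 0 < 1 - r^2)
    (hqs' : (1 - r^2) * (s^2 + 1) ≤ 2*(1+r^2)*(s*c)) (ha : a = s*c) (hab : a^2 + b^2 = s^2) :
    (a - 1)*(a - 1) + b*b ≤ r^2*((a + 1)*(a + 1) + b*b) := by nlinarith

set_option maxHeartbeats 2000000 in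
theorem arctan_image_closedBall (r : ℝ) (hr : 0 < r) (hr1 : r < 1) :
    arctanC '' Metric.closedBall (0 : ℂ) r =
      {z : ℂ |
        2 * |z.re| ≤ Real.arccos (1 / ((1 + r ^ 2) / (1 - r ^ 2))) ∧
        |z.im| ≤ (1 / 2) * Real.log
          (((1 + r ^ 2) / (1 - r ^ 2)) * Real.cos (2 * z.re) +
            Real.sqrt (((1 + r ^ 2) / (1 - r ^ 2)) ^ 2 * Real.cos (2 * z.re) ^ 2 - 1))} := by
  have hden : (0:ℝ) < 1 - r^2 := by nlinarith
  set C : ℝ := (1 + r ^ 2) / (1 - r ^ 2) with hCdef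
  set ρ : ℝ := 2*r / (1 - r^2) with hρdef
  have hC1 : 1 < C := by rw [hCdef, lt_div_iff₀ hden]; nlinarith
  have hCpos : (0:ℝ) < C := by linarith
  have hρpos : 0 < ρ := by rw [hρdef]; positivity
  have hCρ : C^2 - ρ^2 = 1 := by rw [hCdef, hρdef]; field_simp; ring
  have hρC : ρ < C := by
    rw [hCdef, hρdef, div_lt_div_iff₀ hden hden]
    nlinarith [mul_pos (pow_pos (by linarith : (0:ℝ) < 1 - r) 2) hden]
  have h1C : (0:ℝ) < 1/C := by positivity
  have h1C1 : 1/C < 1 := by rw [div_lt_one hCpos]; exact hC1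
  have eC : C * (1 - r^2) = 1 + r^2 := by rw [hCdef]; field_simp
  clear_value C ρ
  ext z
  simp only [Set.mem_image, Metric.mem_closedBall, dist_zero_right,
    Set.mem_setOf_eq]
  constructor
  · rintro ⟨z0, hz0, rfl⟩
    have hx : z0.re^2 + z0.im^2 ≤ r^2 := by
      have h2 : Complex.normSq z0 ≤ r^2 := (abs_le_iff_normSq_le hr.le).mp hz0
      rw [Complex.normSq_apply] at h2
      nlinarith [h2]
    have hd : (1 + Complex.I * z0) ≠ 0 := by
      intro h
      have h2 : Complex.I * z0 = -1 := by linear_combination h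
      have h3 : ‖Complex.I * z0‖ = 1 := by rw [h2]; simp
      rw [norm_mul] at h3
      simp at h3
      rw [h3] at hz0
      linarith
    set w : ℂ := (1 - Complex.I * z0) / (1 + Complex.I * z0) with hwdef
    have harc : arctanC z0 = (Complex.I/2) * Complex.log w := rfl
    clear_value w
    have hnum : Complex.normSq ((1 - Complex.I*z0) - ↑C*(1+Complex.I*z0))
        ≤ ρ^2 * Complex.normSq (1+Complex.I*z0) := by
      have hpos : (0:ℝ) ≤ (r^2 - (z0.re^2+z0.im^2)) * (4*(1-r^2)) / (1-r^2)^2 :=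
        div_nonneg (mul_nonneg (by linarith) (by linarith)) (by positivity)
      have hdiff : ρ^2 * Complex.normSq (1+Complex.I*z0)
          - Complex.normSq ((1 - Complex.I*z0) - ↑C*(1+Complex.I*z0))
          = (r^2 - (z0.re^2+z0.im^2)) * (4*(1-r^2)) / (1-r^2)^2 := by
        simp only [Complex.normSq_apply, Complex.sub_re, Complex.sub_im, Complex.add_re,
          Complex.add_im, Complex.mul_re, Complex.mul_im, Complex.one_re, Complex.one_im,
          Complex.I_re, Complex.I_im, Complex.ofReal_re, Complex.ofReal_im]
        rw [hCdef, hρdef]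
        field_simp
        ring
      linarith [hdiff, hpos]
    have hwCeq : w - ↑C = ((1 - Complex.I*z0) - ↑C*(1+Complex.I*z0))/(1+Complex.I*z0) := by
      rw [hwdef]
      field_simp
    have hnsqwC : Complex.normSq (w - ↑C) ≤ ρ^2 := by
      rw [hwCeq, Complex.normSq_div, div_le_iff₀ (Complex.normSq_pos.mpr hd)]
      linarith [hnum]
    have hnsq2 : (w.re - C)*(w.re - C) + w.im*w.im ≤ ρ^2 := by
      rw [Complex.normSq_apply, Complex.sub_re, Complex.sub_im, Complex.ofReal_re,
        Complex.ofReal_im, sub_zero] at hnsqwC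
      exact hnsqwC
    have hw0 : w ≠ 0 := by
      intro h
      rw [h] at hnsq2
      norm_num at hnsq2
      nlinarith [hρC, hρpos]
    set s : ℝ := ‖w‖ with hsdef
    set φ : ℝ := Complex.arg w with hφdef
    clear_value s φ
    have hspos : 0 < s := by rw [hsdef]; exact norm_pos_iff.mpr hw0
    have hre : w.re = s * Real.cos φ := by
      rw [hφdef, Complex.cos_arg hw0, hsdef]
      rw [mul_div_assoc']
      exact (mul_div_cancel_left₀ _ (norm_ne_zero_iff.mpr hw0)).symm
    have hs2 : w.re^2 + w.im^2 = s^2 := by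
      rw [hsdef, Complex.sq_norm, Complex.normSq_apply]; ring
    rw [hre] at hnsq2 hs2
    have hq : s^2 + 1 ≤ 2*C*(s*Real.cos φ) := l_hq hCρ hnsq2 hs2
    have hCcos : 1 ≤ C * Real.cos φ := l_hCcos hspos hq
    have hcosφ : 1/C ≤ Real.cos φ := by
      rw [div_le_iff₀ hCpos]; linarith [hCcos]
    rw [harc, mulIhalf_re, mulIhalf_im, Complex.log_re, Complex.log_im, ← hφdef, ← hsdef]
    have hcos2 : Real.cos (2 * (-φ/2)) = Real.cos φ := by
      rw [show 2 * (-φ/2) = -φ by ring, Real.cos_neg]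
    constructor
    · have habsφ : |(-φ)/2| = |φ|/2 := by rw [abs_div, abs_neg]; norm_num
      rw [show -φ/2 = (-φ)/2 by ring, habsφ, show 2*(|φ|/2) = |φ| by ring]
      have hφpi : |φ| ≤ π := by rw [hφdef]; exact Complex.abs_arg_le_pi w
      calc |φ| = Real.arccos (Real.cos |φ|) :=
            (Real.arccos_cos (abs_nonneg _) hφpi).symm
        _ = Real.arccos (Real.cos φ) := by rw [Real.cos_abs]
        _ ≤ Real.arccos (1/C) := arccos_anti' hcosφ
    · rw [hcos2]
      set cφ := Real.cos φ with hcφ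
      have hD : 0 ≤ C^2*cφ^2 - 1 := l_hD hCcos
      set sq := Real.sqrt (C^2*cφ^2 - 1) with hsq
      have hsq2 : sq^2 = C^2*cφ^2 - 1 := Real.sq_sqrt hD
      have hsqnn : 0 ≤ sq := Real.sqrt_nonneg _
      clear_value sq
      have hR1 : 1 ≤ C*cφ + sq := by linarith
      have hRpos : 0 < C*cφ + sq := by linarith
      have hsq1 : (s - C*cφ)^2 ≤ C^2*cφ^2 - 1 := l_hsq1 hq
      have h2' := Real.sqrt_le_sqrt hsq1
      rw [Real.sqrt_sq_eq_abs, ← hsq] at h2'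
      have hub : s - C*cφ ≤ sq := le_trans (le_abs_self _) h2'
      have hlb : C*cφ - s ≤ sq := by
        have := neg_le_abs (s - C*cφ)
        linarith
      have hsles : s ≤ C*cφ + sq := by linarith
      have hslow : 1 ≤ s * (C*cφ + sq) :=
        l_hslow (by linarith) hRpos.le hsq2
      have hlogR : Real.log s ≤ Real.log (C*cφ + sq) := Real.log_le_log hspos hsles
      have hlogL : -Real.log (C*cφ + sq) ≤ Real.log s := by
        rw [← Real.log_inv]
        apply Real.log_le_log (by positivity)
        rw [inv_eq_one_div, div_le_iff₀ hRpos]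
        linarith
      have habs2 : |Real.log s / 2| = |Real.log s|/2 := by rw [abs_div]; norm_num
      have := abs_le.mpr ⟨hlogL, hlogR⟩
      rw [habs2]
      linarith
  · rintro ⟨h1, h2⟩
    have h2θ : |2*z.re| ≤ Real.arccos (1/C) := by
      rw [abs_mul, abs_of_pos (by norm_num : (0:ℝ) < 2)]; exact h1
    have hcosθ : 1/C ≤ Real.cos (2*z.re) := by
      have hle := Real.cos_le_cos_of_nonneg_of_le_pi (abs_nonneg (2*z.re))
        (Real.arccos_le_pi (1/C)) h2θ
      rw [Real.cos_arccos (by linarith) (le_of_lt h1C1)] at hle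
      rwa [Real.cos_abs] at hle
    set cθ := Real.cos (2*z.re) with hcθ
    have hCcθ : 1 ≤ C * cθ := by
      rw [div_le_iff₀ hCpos] at hcosθ; linarith [mul_comm C cθ, hcosθ]
    have hD : 0 ≤ C^2*cθ^2 - 1 := l_hD hCcθ
    set sq := Real.sqrt (C^2*cθ^2 - 1) with hsq
    have hsq2 : sq^2 = C^2*cθ^2 - 1 := Real.sq_sqrt hD
    have hsqnn : 0 ≤ sq := Real.sqrt_nonneg _
    clear_value sq
    have hR1 : 1 ≤ C*cθ + sq := by linarith
    have hRpos : (0:ℝ) < C*cθ + sq := by linarith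
    set s : ℝ := Real.exp (2*z.im) with hsdef
    clear_value s
    have hspos : 0 < s := by rw [hsdef]; exact Real.exp_pos _
    have hsle : s ≤ C*cθ + sq := by
      have hy : 2*z.im ≤ Real.log (C*cθ + sq) := by
        have := (abs_le.mp h2).2; linarith
      calc s = Real.exp (2*z.im) := hsdef
        _ ≤ Real.exp (Real.log (C*cθ + sq)) := Real.exp_le_exp.mpr hy
        _ = C*cθ + sq := Real.exp_log hRpos
    have hsge : 1/(C*cθ+sq) ≤ s := by
      have hy : -Real.log (C*cθ + sq) ≤ 2*z.im := by
        have := (abs_le.mp h2).1; linarith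
      calc 1/(C*cθ+sq) = Real.exp (-Real.log (C*cθ+sq)) := by
            rw [Real.exp_neg, Real.exp_log hRpos, one_div]
        _ ≤ Real.exp (2*z.im) := Real.exp_le_exp.mpr hy
        _ = s := hsdef.symm
    have hslow : 1 ≤ s * (C*cθ + sq) := by
      rw [div_le_iff₀ hRpos] at hsge; linarith
    have hqs : s^2 + 1 ≤ 2*C*cθ*s := l_hqs hsq2 hRpos hspos hsle hslow
    set w : ℂ := (↑s : ℂ) * Complex.exp (↑(-(2*z.re)) * Complex.I) with hwdef
    clear_value w
    have habsw : ‖w‖ = s := by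
      rw [hwdef, norm_mul, Complex.norm_exp]
      simp [abs_of_pos hspos]
    have hπ2 : Real.arccos (1/C) ≤ π/2 := Real.arccos_le_pi_div_two.mpr (by linarith)
    have hargw : Complex.arg w = -(2*z.re) := by
      rw [hwdef, Complex.exp_mul_I, Complex.arg_real_mul _ hspos]
      apply Complex.arg_cos_add_sin_mul_I
      have hb := abs_le.mp h2θ
      have hπ := Real.pi_pos
      constructor
      · linarith [hπ2, hb.2]
      · linarith [hπ2, hb.1]
    have hwrect : w = ↑(s*Real.cos (-(2*z.re))) + ↑(s*Real.sin (-(2*z.re))) * Complex.I := by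
      rw [hwdef, Complex.exp_mul_I, ← Complex.ofReal_cos, ← Complex.ofReal_sin]
      push_cast
      ring
    have hwre : w.re = s * cθ := by
      rw [hwrect]
      simp only [Complex.add_re, Complex.ofReal_re, Complex.mul_re, Complex.ofReal_im,
        Complex.I_re, Complex.I_im, mul_zero, zero_mul, mul_one, sub_zero, add_zero,
        zero_sub, neg_zero]
      rw [Real.cos_neg, ← hcθ]
    have hwim : w.im = -(s * Real.sin (2*z.re)) := by
      rw [hwrect]
      simp only [Complex.add_im, Complex.ofReal_im, Complex.mul_im, Complex.ofReal_re,
        Complex.I_re, Complex.I_im, mul_zero, zero_mul, mul_one, sub_zero, add_zero,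
        zero_add, neg_zero]
      rw [Real.sin_neg]
      ring
    have hab2 : w.re^2 + w.im^2 = s^2 := by
      rw [hwre, hwim, hcθ]
      have := Real.sin_sq_add_cos_sq (2*z.re)
      linear_combination (s^2) * this
    have hw1 : w + 1 ≠ 0 := by
      intro h
      have hre1 : w.re + 1 = 0 := by
        have := congrArg Complex.re h
        simpa using this
      rw [hwre] at hre1
      nlinarith [mul_pos hspos (lt_of_lt_of_le h1C hcosθ)]
    set z0 : ℂ := Complex.I*(w-1)/(w+1) with hz0def
    clear_value z0
    have hz0 : ‖z0‖ ≤ r := by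
      rw [abs_le_iff_normSq_le hr.le, hz0def, Complex.normSq_div, map_mul, Complex.normSq_I,
        one_mul, div_le_iff₀ (Complex.normSq_pos.mpr hw1)]
      have hqs' : (1 - r^2) * (s^2 + 1) ≤ 2*(1+r^2)*(s*cθ) := by
        have hmul := mul_le_mul_of_nonneg_left hqs hden.le
        have heq : (1 - r^2) * (2*C*cθ*s) = 2*(1+r^2)*(s*cθ) := by rw [← eC]; ring
        rw [heq] at hmul
        linarith
      rw [Complex.normSq_apply, Complex.normSq_apply]
      simp only [Complex.sub_re, Complex.sub_im, Complex.add_re, Complex.add_im,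
        Complex.one_re, Complex.one_im, sub_zero, add_zero]
      linarith [l_hz0 hden hqs' hwre hab2]
    have hIz : Complex.I * z0 = (1 - w)/(w + 1) := by
      rw [hz0def]
      field_simp
      linear_combination (w - 1) * Complex.I_sq
    have hfz : (1 - Complex.I*z0)/(1 + Complex.I*z0) = w := by
      rw [hIz]
      have h1m : (1:ℂ) - (1 - w)/(w+1) = 2*w/(w+1) := by field_simp; ring
      have h1p : (1:ℂ) + (1 - w)/(w+1) = 2/(w+1) := by field_simp; ring
      rw [h1m, h1p]
      field_simp
    refine ⟨z0, hz0, ?_⟩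
    have harc : arctanC z0 = (Complex.I/2) * Complex.log w := by
      rw [arctanC, hfz]
    rw [harc]
    apply Complex.ext
    · rw [mulIhalf_re, Complex.log_im, hargw]; ring
    · rw [mulIhalf_im, Complex.log_re, habsw, hsdef, Real.log_exp]; ring
end

section
/- With φ(ε) = log²(ε) on (0,1), there exist universal constants c, C > 0 such that for all integers k ≥ 1, c·log²(e+k) ≤ Γ_φ(k) ≤ C·log²(e+k), where Γ_φ(k) = 2k·∫_0^1 (1−ε)^{2k} log²(ε) dε. -/
open Real MeasureTheory intervalIntegral Set

lemma logsq_le {x : ℝ} (hx : 0 < x) (hx1 : x ≤ 1) :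
    Real.log x ^ 2 ≤ 16 * x ^ (-(1/2) : ℝ) := by
  set t : ℝ := -Real.log x with ht
  have ht0 : 0 ≤ t := by simpa [ht] using Real.log_nonpos hx.le hx1
  have hrw : x ^ (-(1/2) : ℝ) = Real.exp (t / 2) := by
    rw [Real.rpow_def_of_pos hx, ht]; ring_nf
  have h1 : 1 + t / 4 ≤ Real.exp (t / 4) := by linarith [Real.add_one_le_exp (t/4)]
  have h2 : (t / 4) ^ 2 ≤ Real.exp (t / 4) ^ 2 := by
    apply pow_le_pow_left₀ (by positivity) (by linarith)
  have h3 : Real.exp (t / 4) ^ 2 = Real.exp (t / 2) := by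
    rw [← Real.exp_nat_mul]; ring_nf
  have : Real.log x ^ 2 = t ^ 2 := by rw [ht]; ring
  rw [this, hrw]; nlinarith [h2, h3]

lemma intInt (n : ℕ) {a b : ℝ} (ha : 0 ≤ a) (hb : b ≤ 1) (hab : a ≤ b) :
    IntervalIntegrable (fun ε : ℝ => (1 - ε) ^ n * Real.log ε ^ 2) volume a b := by
  have hg : IntervalIntegrable (fun x : ℝ => 16 * x ^ (-(1/2) : ℝ)) volume a b :=
    (intervalIntegral.intervalIntegrable_rpow' (by norm_num)).const_mul 16
  apply hg.mono_fun
  · apply Measurable.aestronglyMeasurable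
    exact ((measurable_const.sub measurable_id).pow_const n).mul ((Real.measurable_log).pow_const 2)
  · rw [Filter.EventuallyLE, uIoc_of_le hab]
    refine ae_restrict_of_forall_mem measurableSet_Ioc fun x hx => ?_
    have hx0 : 0 < x := lt_of_le_of_lt ha hx.1
    have hx1 : x ≤ 1 := hx.2.trans hb
    have h1 : |1 - x| ≤ 1 := by rw [abs_le]; constructor <;> linarith
    have h2 : |(1 - x) ^ n| ≤ 1 := by
      rw [abs_pow]; exact pow_le_one₀ (abs_nonneg _) h1
    have h3 : ‖(1 - x) ^ n * Real.log x ^ 2‖ ≤ Real.log x ^ 2 := by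
      rw [norm_mul]
      calc ‖(1 - x) ^ n‖ * ‖Real.log x ^ 2‖ ≤ 1 * ‖Real.log x ^ 2‖ :=
            mul_le_mul_of_nonneg_right h2 (norm_nonneg _)
        _ = Real.log x ^ 2 := by rw [one_mul, Real.norm_eq_abs, abs_of_nonneg (sq_nonneg _)]
    refine h3.trans ?_
    rw [Real.norm_eq_abs, abs_of_nonneg (by positivity)]
    exact logsq_le hx0 hx1

lemma int_one_sub_pow (n : ℕ) : ∫ x in (0:ℝ)..1, (1 - x) ^ n = 1 / (n + 1) := by
  rw [intervalIntegral.integral_comp_sub_left (fun x => x ^ n) 1]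
  simp [integral_pow]


set_option maxHeartbeats 1600000 in
theorem Gamma_log_sq :
    ∃ c C : ℝ, 0 < c ∧ 0 < C ∧ ∀ k : ℕ, 1 ≤ k →
      c * Real.log (Real.exp 1 + k) ^ 2 ≤
          2 * k * ∫ ε in (0 : ℝ)..1, (1 - ε) ^ (2 * k) * Real.log ε ^ 2 ∧
        2 * k * ∫ ε in (0 : ℝ)..1, (1 - ε) ^ (2 * k) * Real.log ε ^ 2 ≤
          C * Real.log (Real.exp 1 + k) ^ 2 := by
  refine ⟨1/4, 80, by norm_num, by norm_num, fun k hk => ?_⟩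
  have hK : (1 : ℝ) ≤ (k : ℝ) := by exact_mod_cast hk
  set K : ℝ := (k : ℝ) with hKdef
  have hK0 : (0:ℝ) < K := by linarith
  set n := 2 * k with hn
  have hnK : (n : ℝ) = 2 * K := by rw [hn]; push_cast; ring
  set f : ℝ → ℝ := fun ε => (1 - ε) ^ n * Real.log ε ^ 2 with hfdef
  have hfnonneg : ∀ x : ℝ, x ≤ 1 → 0 ≤ f x := fun x hx =>
    mul_nonneg (pow_nonneg (by linarith) _) (sq_nonneg _)
  have hL : 1 ≤ Real.log (Real.exp 1 + K) := by
    rw [Real.le_log_iff_exp_le (by positivity)]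
    linarith [Real.exp_pos 1]
  have hLpos : 0 ≤ Real.log (Real.exp 1 + K) := by linarith
  have hne : ∀ᵐ x : ℝ ∂volume, x ≠ 0 := by
    refine (MeasureTheory.ae_iff).mpr ?_
    simp
  set I : ℝ := ∫ ε in (0:ℝ)..1, f ε with hIdef
  constructor
  · -- lower bound
    set d : ℝ := 1 / (4 * K) with hddef
    have hd0 : 0 < d := by positivity
    have hd1 : d ≤ 1 := by rw [hddef, div_le_one (by positivity)]; linarith
    have hint1 := intInt n (le_refl 0) hd1 hd0.le
    have hint2 := intInt n hd0.le (le_refl 1) hd1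
    have hsplit : I = (∫ ε in (0:ℝ)..d, f ε) + ∫ ε in d..(1:ℝ), f ε :=
      (intervalIntegral.integral_add_adjacent_intervals hint1 hint2).symm
    have hright : 0 ≤ ∫ ε in d..(1:ℝ), f ε :=
      intervalIntegral.integral_nonneg hd1 (fun u hu => hfnonneg u hu.2)
    set c : ℝ := 1/2 * Real.log (4 * K) ^ 2 with hcdef
    have hlog4K : 0 ≤ Real.log (4 * K) := Real.log_nonneg (by linarith)
    have hlow : (∫ ε in (0:ℝ)..d, (fun _ => c) ε) ≤ ∫ ε in (0:ℝ)..d, f ε := by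
      apply intervalIntegral.integral_mono_ae_restrict hd0.le
        (intervalIntegrable_const) hint1
      filter_upwards [ae_restrict_mem measurableSet_Icc, ae_restrict_of_ae hne]
        with x hx hx0
      have hx0' : 0 < x := lt_of_le_of_lt (le_of_eq rfl) (lt_of_le_of_ne hx.1 (Ne.symm hx0))
      have hxd : x ≤ d := hx.2
      -- (1-x)^n ≥ 1/2
      have hbern : 1 + (n : ℝ) * (-x) ≤ (1 + (-x)) ^ n :=
        one_add_mul_le_pow (by nlinarith [hd1] : (-2:ℝ) ≤ -x) n
      have hpow : (1/2 : ℝ) ≤ (1 - x) ^ n := by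
        have hxs : (n:ℝ) * x ≤ 1/2 := by
          rw [hnK]
          calc 2 * K * x ≤ 2 * K * d := by nlinarith
            _ = 1/2 := by rw [hddef]; field_simp; ring
        calc (1/2 : ℝ) ≤ 1 - (n:ℝ) * x := by linarith
          _ ≤ (1 - x) ^ n := by
              have := hbern; rw [show (1:ℝ) + -x = 1 - x by ring] at this; linarith
      -- log x ^ 2 ≥ log (4K) ^ 2
      have hlogx : Real.log x ≤ -Real.log (4 * K) := by
        rw [← Real.log_inv]
        apply (Real.log_le_log_iff hx0' (by positivity)).mpr
        rw [hddef] at hxd; rw [one_div] at hxd; exact hxd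
      have hsq : Real.log (4 * K) ^ 2 ≤ Real.log x ^ 2 := by
        have h1 : Real.log (4 * K) ≤ -Real.log x := by linarith
        calc Real.log (4 * K) ^ 2 ≤ (-Real.log x) ^ 2 := by
              exact pow_le_pow_left₀ hlog4K h1 2
          _ = Real.log x ^ 2 := by ring
      calc c ≤ 1/2 * Real.log x ^ 2 := by
            rw [hcdef]; nlinarith
        _ ≤ f x := by
            rw [hfdef]
            exact mul_le_mul hpow (le_refl _) (sq_nonneg _) (pow_nonneg (by linarith) _)
    rw [intervalIntegral.integral_const, smul_eq_mul, sub_zero] at hlow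
    have hIlow : d * c ≤ I := by rw [hsplit]; linarith
    have hfin : 2 * K * (d * c) = 1/4 * Real.log (4 * K) ^ 2 := by
      rw [hddef, hcdef]; field_simp
    have hmono : Real.log (Real.exp 1 + K) ^ 2 ≤ Real.log (4 * K) ^ 2 := by
      apply pow_le_pow_left₀ hLpos
      apply (Real.log_le_log_iff (by positivity) (by positivity)).mpr
      nlinarith [Real.exp_one_lt_d9]
    calc 1/4 * Real.log (Real.exp 1 + K) ^ 2 ≤ 1/4 * Real.log (4*K) ^ 2 := by linarith
      _ = 2 * K * (d * c) := hfin.symm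
      _ ≤ 2 * K * I := by
          apply mul_le_mul_of_nonneg_left hIlow (by positivity)
  · -- upper bound
    set d : ℝ := ((2*K)^4)⁻¹ with hddef
    have hd0 : 0 < d := by positivity
    have hd1 : d ≤ 1 := by
      rw [hddef, inv_le_one_iff₀]; right; exact one_le_pow₀ (by linarith)
    have hint1 := intInt n (le_refl 0) hd1 hd0.le
    have hint2 := intInt n hd0.le (le_refl 1) hd1
    have hsplit : I = (∫ ε in (0:ℝ)..d, f ε) + ∫ ε in d..(1:ℝ), f ε :=
      (intervalIntegral.integral_add_adjacent_intervals hint1 hint2).symm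
    -- term 1
    have hg : IntervalIntegrable (fun x : ℝ => 16 * x ^ (-(1/2) : ℝ)) volume 0 d :=
      (intervalIntegral.intervalIntegrable_rpow' (by norm_num)).const_mul 16
    have hterm1 : (∫ ε in (0:ℝ)..d, f ε) ≤ ∫ x in (0:ℝ)..d, 16 * x ^ (-(1/2) : ℝ) := by
      apply intervalIntegral.integral_mono_ae_restrict hd0.le hint1 hg
      filter_upwards [ae_restrict_mem measurableSet_Icc, ae_restrict_of_ae hne]
        with x hx hx0
      have hx0' : 0 < x := lt_of_le_of_ne hx.1 (Ne.symm hx0)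
      have hx1 : x ≤ 1 := hx.2.trans hd1
      have h1 : f x ≤ Real.log x ^ 2 := by
        rw [hfdef]
        have h2 : (1 - x) ^ n ≤ 1 := pow_le_one₀ (by linarith) (by linarith)
        exact mul_le_of_le_one_left (sq_nonneg _) h2
      exact h1.trans (logsq_le hx0' hx1)
    have hrpow : (∫ x in (0:ℝ)..d, 16 * x ^ (-(1/2) : ℝ)) = 32 * Real.sqrt d := by
      rw [intervalIntegral.integral_const_mul, integral_rpow (Or.inl (by norm_num))]
      rw [show (-(1/2) : ℝ) + 1 = 1/2 by norm_num]
      rw [Real.zero_rpow (by norm_num), ← Real.sqrt_eq_rpow]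
      ring
    have hsqrtd : Real.sqrt d = (4 * K ^ 2)⁻¹ := by
      have hd2 : d = ((4 * K ^ 2)⁻¹) ^ 2 := by
        rw [hddef]; field_simp; ring
      rw [hd2, Real.sqrt_sq (by positivity)]
    have hterm1' : (∫ ε in (0:ℝ)..d, f ε) ≤ 8 / K ^ 2 := by
      rw [hrpow, hsqrtd] at hterm1
      calc (∫ ε in (0:ℝ)..d, f ε) ≤ 32 * (4 * K ^ 2)⁻¹ := hterm1
        _ = 8 / K ^ 2 := by field_simp; ring
    -- term 2
    set M : ℝ := 4 * Real.log (2 * K) with hMdef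
    have hM0 : 0 ≤ M := by
      rw [hMdef]; have := Real.log_nonneg (by linarith : (1:ℝ) ≤ 2 * K); linarith
    have hcont : Continuous fun x : ℝ => (1 - x) ^ n * M ^ 2 :=
      ((continuous_const.sub continuous_id).pow n).mul continuous_const
    have hterm2 : (∫ ε in d..(1:ℝ), f ε) ≤ ∫ x in d..(1:ℝ), (1 - x) ^ n * M ^ 2 := by
      apply intervalIntegral.integral_mono_on hd1 hint2 (hcont.intervalIntegrable d 1)
      intro x hx
      have hx0 : 0 < x := lt_of_lt_of_le hd0 hx.1
      have hx1 : x ≤ 1 := hx.2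
      have hlogd : Real.log d = -M := by
        rw [hddef, Real.log_inv, Real.log_pow, hMdef]; push_cast; ring
      have h1 : -M ≤ Real.log x := by
        rw [← hlogd]
        exact (Real.log_le_log_iff hd0 hx0).mpr hx.1
      have h2 : Real.log x ≤ M := le_trans (Real.log_nonpos hx0.le hx1) hM0
      have hsq : Real.log x ^ 2 ≤ M ^ 2 := sq_le_sq' h1 h2
      exact mul_le_mul_of_nonneg_left hsq (pow_nonneg (by linarith) _)
    have hpint : IntervalIntegrable (fun x : ℝ => (1 - x) ^ n) volume 0 1 :=
      (((continuous_const.sub continuous_id).pow n)).intervalIntegrable 0 1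
    have hpow_le : (∫ x in d..(1:ℝ), (1 - x) ^ n) ≤ 1 / (2 * K) := by
      have hsum : (∫ x in (0:ℝ)..d, (1 - x) ^ n) + (∫ x in d..(1:ℝ), (1 - x) ^ n)
          = ∫ x in (0:ℝ)..1, (1 - x) ^ n :=
        intervalIntegral.integral_add_adjacent_intervals
          (hpint.mono_set (by rw [Set.uIcc_of_le hd0.le, Set.uIcc_of_le (zero_le_one)]; exact Set.Icc_subset_Icc le_rfl hd1))
          (hpint.mono_set (by rw [Set.uIcc_of_le hd1, Set.uIcc_of_le (zero_le_one)]; exact Set.Icc_subset_Icc hd0.le le_rfl))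
      have hnn : 0 ≤ ∫ x in (0:ℝ)..d, (1 - x) ^ n :=
        intervalIntegral.integral_nonneg hd0.le (fun u hu => pow_nonneg (by linarith [hu.2, hd1]) n)
      rw [int_one_sub_pow n] at hsum
      have : (∫ x in d..(1:ℝ), (1 - x) ^ n) ≤ 1 / ((n:ℝ) + 1) := by linarith
      refine this.trans ?_
      rw [hnK]
      apply div_le_div_of_nonneg_left (by norm_num) (by positivity) (by linarith)
    have hterm2' : (∫ ε in d..(1:ℝ), f ε) ≤ M ^ 2 / (2 * K) := by
      have heq : (∫ x in d..(1:ℝ), (1 - x) ^ n * M ^ 2)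
          = (∫ x in d..(1:ℝ), (1 - x) ^ n) * M ^ 2 := by
        rw [← intervalIntegral.integral_mul_const]
      calc (∫ ε in d..(1:ℝ), f ε) ≤ (∫ x in d..(1:ℝ), (1 - x) ^ n) * M ^ 2 := by
            rw [← heq]; exact hterm2
        _ ≤ 1 / (2 * K) * M ^ 2 := by
            apply mul_le_mul_of_nonneg_right hpow_le (sq_nonneg _)
        _ = M ^ 2 / (2 * K) := by ring
    -- combine
    have hMle : M ≤ 8 * Real.log (Real.exp 1 + K) := by
      have hkey : (2 * K : ℝ) ≤ (Real.exp 1 + K) ^ 2 := by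
        have he1 : (1:ℝ) ≤ Real.exp 1 := Real.one_le_exp (by norm_num)
        have h1 : ((1:ℝ) + K) ^ 2 ≤ (Real.exp 1 + K) ^ 2 :=
          pow_le_pow_left₀ (by linarith) (by linarith) 2
        have h2 : (2 * K : ℝ) ≤ (1 + K) ^ 2 := by nlinarith [sq_nonneg (1 - K)]
        linarith
      have h2K : Real.log (2 * K) ≤ 2 * Real.log (Real.exp 1 + K) := by
        have hlp : Real.log ((Real.exp 1 + K) ^ 2) = 2 * Real.log (Real.exp 1 + K) := by
          rw [Real.log_pow]; push_cast; ring
        rw [← hlp]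
        exact (Real.log_le_log_iff (by positivity) (by positivity)).mpr hkey
      rw [hMdef]; linarith
    have hMsq : M ^ 2 ≤ 64 * Real.log (Real.exp 1 + K) ^ 2 := by
      have := pow_le_pow_left₀ hM0 hMle 2
      calc M ^ 2 ≤ (8 * Real.log (Real.exp 1 + K)) ^ 2 := this
        _ = 64 * Real.log (Real.exp 1 + K) ^ 2 := by ring
    have hfinal : 2 * K * I ≤ 2 * K * (8 / K ^ 2) + 2 * K * (M ^ 2 / (2 * K)) := by
      rw [hsplit, mul_add]
      have h1 := mul_le_mul_of_nonneg_left hterm1' (by positivity : (0:ℝ) ≤ 2 * K)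
      have h2 := mul_le_mul_of_nonneg_left hterm2' (by positivity : (0:ℝ) ≤ 2 * K)
      linarith
    have e1 : 2 * K * (8 / K ^ 2) = 16 / K := by field_simp; ring
    have e2 : 2 * K * (M ^ 2 / (2 * K)) = M ^ 2 := by field_simp
    have e3 : 16 / K ≤ 16 := by
      rw [div_le_iff₀ hK0]; nlinarith
    calc 2 * K * I ≤ 16 / K + M ^ 2 := by rw [e1, e2] at hfinal; exact hfinal
      _ ≤ 16 + 64 * Real.log (Real.exp 1 + K) ^ 2 := by linarith
      _ ≤ 80 * Real.log (Real.exp 1 + K) ^ 2 := by nlinarith [hL, hLpos]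
end
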